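/- arXiv:2602.03861 — 4 statements merged into one kernel-verified Lean document; each statement's English description precedes it below -/
import Mathlib

section
/- Let m be an odd integer with m ≥ 58 and let Ĝ be a connected graph attaining the maximum spectral radius among all graphs in 𝒢(m,H(4,3)) other than K_2 ∨ ((m−1)/2)K_1, and suppose additionally that Ĝ is not isomorphic to K_1 ∨ (K_{1,(m−3)/2} ∪ 2K_1). Let u* be a vertex of maximum Perron-vector entry, U = N(u*), and W = V(Ĝ)∖(U∪{u*}). If λ(Ĝ) > (1 + √(4m−7))/2, then W = ∅. -/
open Finset

/-- The spectral radius of a finite simple graph: the supremum of the real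
spectrum of its adjacency matrix. -/
noncomputable def specRad {V : Type*} [Fintype V] [DecidableEq V] (G : SimpleGraph V) : ℝ :=
  letI := Classical.decRel G.Adj
  sSup (spectrum ℝ (SimpleGraph.adjMatrix ℝ G))

/-- The fish graph `H(4,3)`: a 4-cycle 0-1-2-3-0 and a triangle 0-4-5 sharing vertex 0. -/
def H43 : SimpleGraph (Fin 6) :=
  SimpleGraph.fromEdgeSet {s(0, 1), s(1, 2), s(2, 3), s(3, 0), s(0, 4), s(4, 5), s(5, 0)}

/-- The bowtie graph `H(3,3)` (also `F₂`): two triangles 0-1-2 and 0-3-4 sharing vertex 0. -/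
def H33 : SimpleGraph (Fin 5) :=
  SimpleGraph.fromEdgeSet {s(0, 1), s(1, 2), s(2, 0), s(0, 3), s(3, 4), s(4, 0)}

/-- `G` contains a (not necessarily induced) subgraph isomorphic to `H`. -/
def HasSubgraphCopy {W V : Type*} (H : SimpleGraph W) (G : SimpleGraph V) : Prop :=
  ∃ f : W → V, Function.Injective f ∧ ∀ ⦃a b⦄, H.Adj a b → G.Adj (f a) (f b)

/-- `G` is `H`-free: it contains no subgraph isomorphic to `H`. -/
def GraphFree {W V : Type*} (H : SimpleGraph W) (G : SimpleGraph V) : Prop :=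
  ¬ HasSubgraphCopy H G

/-- The book graph `K₂ ∨ k·K₁`, on vertices `Fin (k+2)`: vertices 0 and 1 form the `K₂`
and are joined to all of the `k` remaining independent vertices. -/
def bookGraph (k : ℕ) : SimpleGraph (Fin (k + 2)) where
  Adj x y := x ≠ y ∧ (x.val < 2 ∨ y.val < 2)
  symm := ⟨fun _ _ h => ⟨h.1.symm, h.2.symm⟩⟩
  loopless := ⟨fun _ h => h.1 rfl⟩

/-- `S⁻`: the graph obtained from the book graph `K₂ ∨ k·K₁` by deleting one edge
incident to a vertex of degree two (the edge between vertices 1 and 2). -/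
def bookMinus (k : ℕ) : SimpleGraph (Fin (k + 2)) where
  Adj x y := x ≠ y ∧ (x.val < 2 ∨ y.val < 2) ∧
    ¬(x.val = 1 ∧ y.val = 2) ∧ ¬(x.val = 2 ∧ y.val = 1)
  symm := by
    constructor
    rintro x y ⟨h1, h2, h3, h4⟩
    exact ⟨h1.symm, h2.symm, fun h => h4 ⟨h.2, h.1⟩, fun h => h3 ⟨h.2, h.1⟩⟩
  loopless := ⟨fun _ h => h.1 rfl⟩

/-- The graph `K₁ ∨ (K_{1,t} ∪ 2K₁)` on `Fin (t+4)`: vertex 0 is the apex joined to all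
other vertices, vertex 1 is the star center joined to the `t` leaves `4, …, t+3`,
and vertices 2, 3 are the two extra vertices (joined only to the apex). -/
def extGraph (t : ℕ) : SimpleGraph (Fin (t + 4)) where
  Adj x y := x ≠ y ∧ (x.val = 0 ∨ y.val = 0 ∨ (x.val = 1 ∧ 4 ≤ y.val) ∨ (y.val = 1 ∧ 4 ≤ x.val))
  symm := by
    constructor
    rintro x y ⟨h1, h2⟩
    exact ⟨h1.symm, by tauto⟩
  loopless := ⟨fun _ h => h.1 rfl⟩

/-- The star `K_{1,r}` on `Fin (r+1)`, with center 0. -/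
def starGraph (r : ℕ) : SimpleGraph (Fin (r + 1)) where
  Adj x y := x ≠ y ∧ (x.val = 0 ∨ y.val = 0)
  symm := ⟨fun _ _ h => ⟨h.1.symm, h.2.symm⟩⟩
  loopless := ⟨fun _ h => h.1 rfl⟩

/-- Membership in the family `𝒢(m, H(4,3))`: `H(4,3)`-free, `m` edges, no isolated vertices. -/
def memFamily {V : Type*} [Fintype V] [DecidableEq V] (m : ℕ) (G : SimpleGraph V) : Prop :=
  GraphFree H43 G ∧ G.edgeSet.ncard = m ∧ ∀ v : V, ∃ w, G.Adj v w

/-- `e(S)`: the number of edges of `G` with both endpoints in `S`. -/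
noncomputable def eIn {V : Type*} (G : SimpleGraph V) (S : Set V) : ℕ :=
  {e ∈ G.edgeSet | ∀ v ∈ e, v ∈ S}.ncard

/-- `e(S,T)`: the number of edges of `G` with one endpoint in `S` and the other in `T`. -/
noncomputable def eBetween {V : Type*} (G : SimpleGraph V) (S T : Set V) : ℕ :=
  {e ∈ G.edgeSet | ∃ a ∈ S, ∃ b ∈ T, e = s(a, b)}.ncard

/-- `d_S(u)`: the number of neighbours of `u` inside `S`. -/
noncomputable def dIn {V : Type*} (G : SimpleGraph V) (S : Set V) (u : V) : ℕ :=
  (S ∩ G.neighborSet u).ncard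

/-- `U = N(u)`. -/
def Uset {V : Type*} (G : SimpleGraph V) (u : V) : Set V := G.neighborSet u

/-- `W = V(G) \ (U ∪ {u})`. -/
def Wset {V : Type*} (G : SimpleGraph V) (u : V) : Set V :=
  Set.univ \ (G.neighborSet u ∪ {u})

/-- `U₀ = {v ∈ U : d_U(v) = 0}`. -/
noncomputable def U0set {V : Type*} (G : SimpleGraph V) (u : V) : Set V :=
  {v ∈ G.neighborSet u | dIn G (G.neighborSet u) v = 0}

/-- `U₊ = U \ U₀`. -/
noncomputable def Uplusset {V : Type*} (G : SimpleGraph V) (u : V) : Set V :=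
  {v ∈ G.neighborSet u | dIn G (G.neighborSet u) v ≠ 0}

/-- `G` attains the maximum spectral radius among all graphs in `𝒢(m, H(4,3))` other than
the book graph `K₂ ∨ ((m-1)/2)·K₁`. -/
def isExtremal {V : Type*} [Fintype V] [DecidableEq V] (m : ℕ) (G : SimpleGraph V) : Prop :=
  memFamily m G ∧ ¬ Nonempty (G ≃g bookGraph ((m - 1) / 2)) ∧
    ∀ (n : ℕ) (H : SimpleGraph (Fin n)), memFamily m H →
      ¬ Nonempty (H ≃g bookGraph ((m - 1) / 2)) → specRad H ≤ specRad G

section helpers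
variable {V : Type*} [Fintype V] [DecidableEq V]

lemma inter_nbr_eq_filter (G : SimpleGraph V) [DecidableRel G.Adj] (S : Finset V) (v : V) :
    S ∩ G.neighborFinset v = S.filter (fun w => G.Adj v w) := by
  ext w; simp [SimpleGraph.mem_neighborFinset, and_comm]

lemma swapSum (G : SimpleGraph V) [DecidableRel G.Adj] (S T : Finset V) (f : V → ℝ) :
    ∑ v ∈ S, ∑ w ∈ T ∩ G.neighborFinset v, f w
      = ∑ w ∈ T, ((S ∩ G.neighborFinset w).card : ℝ) * f w := by
  have h1 : ∀ v, ∑ w ∈ T ∩ G.neighborFinset v, f w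
      = ∑ w ∈ T, if G.Adj v w then f w else 0 := by
    intro v
    rw [inter_nbr_eq_filter, Finset.sum_filter]
  simp_rw [h1]
  rw [Finset.sum_comm]
  refine Finset.sum_congr rfl (fun w _ => ?_)
  have : (∑ v ∈ S, if G.Adj v w then f w else 0)
      = ∑ v ∈ S.filter (fun v => G.Adj w v), f w := by
    rw [Finset.sum_filter]
    refine Finset.sum_congr rfl (fun v _ => ?_)
    exact if_congr (G.adj_comm v w) rfl rfl
  rw [this, ← inter_nbr_eq_filter, Finset.sum_const, nsmul_eq_mul]

lemma swapCard (G : SimpleGraph V) [DecidableRel G.Adj] (S T : Finset V) :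
    ∑ v ∈ S, (T ∩ G.neighborFinset v).card = ∑ w ∈ T, (S ∩ G.neighborFinset w).card := by
  have := swapSum G S T (fun _ => (1:ℝ))
  simp only [mul_one, Finset.sum_const, nsmul_eq_mul] at this
  exact_mod_cast this

lemma H43_adj_iff (a b : Fin 6) : H43.Adj a b ↔
    (s(a,b) = s(0,1) ∨ s(a,b) = s(1,2) ∨ s(a,b) = s(2,3) ∨ s(a,b) = s(3,0) ∨
     s(a,b) = s(0,4) ∨ s(a,b) = s(4,5) ∨ s(a,b) = s(5,0)) ∧ a ≠ b := by
  rw [H43, SimpleGraph.fromEdgeSet_adj]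
  simp [Set.mem_insert_iff]

lemma h43_copy {V' : Type*} (G : SimpleGraph V') (u0 u1 u2 u3 u4 u5 : V')
    (d01 : u0 ≠ u1) (d02 : u0 ≠ u2) (d03 : u0 ≠ u3) (d04 : u0 ≠ u4) (d05 : u0 ≠ u5)
    (d12 : u1 ≠ u2) (d13 : u1 ≠ u3) (d14 : u1 ≠ u4) (d15 : u1 ≠ u5)
    (d23 : u2 ≠ u3) (d24 : u2 ≠ u4) (d25 : u2 ≠ u5)
    (d34 : u3 ≠ u4) (d35 : u3 ≠ u5) (d45 : u4 ≠ u5)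
    (h01 : G.Adj u0 u1) (h12 : G.Adj u1 u2) (h23 : G.Adj u2 u3) (h30 : G.Adj u3 u0)
    (h04 : G.Adj u0 u4) (h45 : G.Adj u4 u5) (h50 : G.Adj u5 u0) :
    HasSubgraphCopy H43 G := by
  refine ⟨![u0, u1, u2, u3, u4, u5], ?_, ?_⟩
  · intro a b h
    fin_cases a <;> fin_cases b <;>
      simp only [Matrix.cons_val_zero, Matrix.cons_val_one, Matrix.head_cons,
        Matrix.cons_val_succ] at h <;>
      first
        | rfl
        | (exact absurd h (by assumption))
        | (exact absurd h.symm (by assumption))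
  · intro a b hab
    rw [H43_adj_iff] at hab
    obtain ⟨h, -⟩ := hab
    rcases h with h|h|h|h|h|h|h <;> rw [Sym2.eq_iff] at h <;>
      rcases h with ⟨ha, hb⟩|⟨ha, hb⟩ <;> subst ha <;> subst hb <;>
      first
        | exact h01 | exact h01.symm | exact h12 | exact h12.symm
        | exact h23 | exact h23.symm | exact h30 | exact h30.symm
        | exact h04 | exact h04.symm | exact h45 | exact h45.symm
        | exact h50 | exact h50.symm

end helpers

set_option maxHeartbeats 1000000 in
/-- For odd `m ≥ 58`, if `Ĝ` is a connected spectral-extremal graph in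
`𝒢(m,H(4,3)) \ {K₂ ∨ ((m-1)/2)K₁}` which is moreover not isomorphic to
`K₁ ∨ (K_{1,(m-3)/2} ∪ 2K₁)`, and `λ(Ĝ) > (1 + √(4m-7))/2`, then `W = ∅`. -/
theorem stmt_10 {V : Type*} [Fintype V] [DecidableEq V] (m : ℕ) (hm : 58 ≤ m) (hodd : Odd m)
    (Ghat : SimpleGraph V) [DecidableRel Ghat.Adj] (hconn : Ghat.Connected)
    (hext : isExtremal m Ghat)
    (hnotext : ¬ Nonempty (Ghat ≃g extGraph ((m - 3) / 2)))
    (x : V → ℝ) (hpos : ∀ v, 0 < x v) (hunit : ∑ v : V, x v ^ 2 = 1)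
    (heig : (SimpleGraph.adjMatrix ℝ Ghat).mulVec x = specRad Ghat • x)
    (ustar : V) (hmaxx : ∀ v, x v ≤ x ustar)
    (hlam : (1 + Real.sqrt (4 * (m : ℝ) - 7)) / 2 < specRad Ghat) :
    Wset Ghat ustar = ∅ := by
  classical
  -- Notation
  have hfree : ¬ HasSubgraphCopy H43 Ghat := hext.1.1
  have hmem : ∀ v : V, ∃ w, Ghat.Adj v w := hext.1.2.2
  have hm' : Ghat.edgeFinset.card = m := by
    have := hext.1.2.1
    rw [← this, SimpleGraph.edgeFinset]
    exact (Set.ncard_eq_toFinset_card' _).symm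
  set lam : ℝ := specRad Ghat with hlamdef
  have heq : ∀ v : V, lam * x v = ∑ w ∈ Ghat.neighborFinset v, x w := by
    intro v
    have := congrFun heig v
    rw [SimpleGraph.adjMatrix_mulVec_apply] at this
    rw [this, Pi.smul_apply, smul_eq_mul]
  have hm58 : (58:ℝ) ≤ (m:ℝ) := by exact_mod_cast hm
  have hsq : Real.sqrt (4 * (m:ℝ) - 7) ^ 2 = 4 * (m:ℝ) - 7 := by
    rw [Real.sq_sqrt]; nlinarith
  have hl8 : (8:ℝ) < lam := by
    have h15 : (15:ℝ) ≤ Real.sqrt (4 * (m:ℝ) - 7) := by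
      have : ((15:ℝ))^2 ≤ 4 * (m:ℝ) - 7 := by nlinarith
      nlinarith [Real.sq_sqrt (by nlinarith : (0:ℝ) ≤ 4 * (m:ℝ) - 7),
        Real.sqrt_nonneg (4 * (m:ℝ) - 7)]
    calc (8:ℝ) = (1 + 15)/2 := by norm_num
    _ ≤ (1 + Real.sqrt (4 * (m:ℝ) - 7))/2 := by linarith
    _ < lam := hlam
  have hl2 : (m:ℝ) - 2 < lam^2 - lam := by
    have hs : Real.sqrt (4 * (m:ℝ) - 7) < 2 * lam - 1 := by
      have := hlam; linarith
    have hnn : (0:ℝ) ≤ Real.sqrt (4 * (m:ℝ) - 7) := Real.sqrt_nonneg _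
    nlinarith
  -- The sets
  set U : Finset V := Ghat.neighborFinset ustar with hUdef
  set Wf : Finset V := univ \ insert ustar U with hWdef
  have hUne : ∀ v ∈ U, v ≠ ustar := by
    intro v hv
    exact fun h => Ghat.loopless.irrefl ustar (h ▸ (Ghat.mem_neighborFinset ustar v).1 hv).symm
  have hUadj : ∀ v ∈ U, Ghat.Adj ustar v := fun v hv => (Ghat.mem_neighborFinset ustar v).1 hv
  have hWne : ∀ w ∈ Wf, w ≠ ustar ∧ w ∉ U := by
    intro w hw
    rw [hWdef, Finset.mem_sdiff, Finset.mem_insert] at hw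
    exact ⟨fun h => hw.2 (Or.inl h), fun h => hw.2 (Or.inr h)⟩
  have hWnadj : ∀ w ∈ Wf, ¬ Ghat.Adj ustar w := by
    intro w hw hadj
    exact (hWne w hw).2 ((Ghat.mem_neighborFinset ustar w).2 hadj)
  have hUW : ∀ v, v ∈ U → v ∈ Wf → False := by
    intro v hU hW; exact (hWne v hW).2 hU
  have hsU : ustar ∉ U := fun h => (hUne ustar h) rfl
  have hsW : ustar ∉ Wf := by
    intro h; exact (hWne ustar h).1 rfl
  -- splitting lemmas
  have sumSplit : ∀ (A : Finset V) (f : V → ℝ), ∑ w ∈ A, f w =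
      (if ustar ∈ A then f ustar else 0) + (∑ w ∈ A ∩ U, f w) + (∑ w ∈ A ∩ Wf, f w) := by
    intro A f
    have hAW : A ∩ Wf = A \ insert ustar U := by
      ext w
      simp only [hWdef, Finset.mem_inter, Finset.mem_sdiff, Finset.mem_univ, true_and]
    have h1 : (∑ w ∈ A ∩ insert ustar U, f w) + (∑ w ∈ A \ insert ustar U, f w)
        = ∑ w ∈ A, f w := Finset.sum_inter_add_sum_sdiff A _ f
    rw [hAW, ← h1]
    by_cases hu : ustar ∈ A
    · have h2 : A ∩ insert ustar U = insert ustar (A ∩ U) := by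
        ext w
        simp only [Finset.mem_inter, Finset.mem_insert]
        constructor
        · rintro ⟨hwA, h | h⟩
          exacts [Or.inl h, Or.inr ⟨hwA, h⟩]
        · rintro (h | ⟨hwA, h⟩)
          exacts [⟨h ▸ hu, Or.inl h⟩, ⟨hwA, Or.inr h⟩]
      rw [h2, Finset.sum_insert (by simp [hsU]), if_pos hu]
    · have h2 : A ∩ insert ustar U = A ∩ U := by
        ext w; simp only [Finset.mem_insert, Finset.mem_inter]
        constructor
        · rintro ⟨hw, h | h⟩
          · exact absurd (h ▸ hw) hu
          · exact ⟨hw, h⟩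
        · rintro ⟨hw, h⟩; exact ⟨hw, Or.inr h⟩
      rw [h2, if_neg hu]; ring
  have cardSplit : ∀ (A : Finset V), A.card =
      (if ustar ∈ A then 1 else 0) + (A ∩ U).card + (A ∩ Wf).card := by
    intro A
    have hAW : A ∩ Wf = A \ insert ustar U := by
      ext w
      simp only [hWdef, Finset.mem_inter, Finset.mem_sdiff, Finset.mem_univ, true_and]
    have h1 : (A ∩ insert ustar U).card + (A \ insert ustar U).card = A.card :=
      Finset.card_inter_add_card_sdiff A _
    rw [hAW, ← h1]
    by_cases hu : ustar ∈ A
    · have h2 : A ∩ insert ustar U = insert ustar (A ∩ U) := by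
        ext w
        simp only [Finset.mem_inter, Finset.mem_insert]
        constructor
        · rintro ⟨hwA, h | h⟩
          exacts [Or.inl h, Or.inr ⟨hwA, h⟩]
        · rintro (h | ⟨hwA, h⟩)
          exacts [⟨h ▸ hu, Or.inl h⟩, ⟨hwA, Or.inr h⟩]
      rw [h2, Finset.card_insert_of_notMem (by simp [hsU]), if_pos hu]; omega
    · have h2 : A ∩ insert ustar U = A ∩ U := by
        ext w; simp only [Finset.mem_insert, Finset.mem_inter]
        constructor
        · rintro ⟨hw, h | h⟩
          · exact absurd (h ▸ hw) hu
          · exact ⟨hw, h⟩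
        · rintro ⟨hw, h⟩; exact ⟨hw, Or.inr h⟩
      rw [h2, if_neg hu]; omega
  set d : ℕ := U.card with hd
  set SU : ℕ := ∑ v ∈ U, (U ∩ Ghat.neighborFinset v).card with hSU
  set TW : ℕ := ∑ w ∈ Wf, (U ∩ Ghat.neighborFinset w).card with hTW
  set SW : ℕ := ∑ w ∈ Wf, (Wf ∩ Ghat.neighborFinset w).card with hSW
  have natSumSplit : ∀ (A : Finset V) (f : V → ℕ), ∑ w ∈ A, f w =
      (if ustar ∈ A then f ustar else 0) + (∑ w ∈ A ∩ U, f w) + (∑ w ∈ A ∩ Wf, f w) := by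
    intro A f
    have hAW : A ∩ Wf = A \ insert ustar U := by
      ext w
      simp only [hWdef, Finset.mem_inter, Finset.mem_sdiff, Finset.mem_univ, true_and]
    have h1 : (∑ w ∈ A ∩ insert ustar U, f w) + (∑ w ∈ A \ insert ustar U, f w)
        = ∑ w ∈ A, f w := Finset.sum_inter_add_sum_sdiff A _ f
    rw [hAW, ← h1]
    by_cases hu : ustar ∈ A
    · have h2 : A ∩ insert ustar U = insert ustar (A ∩ U) := by
        ext w
        simp only [Finset.mem_inter, Finset.mem_insert]
        constructor
        · rintro ⟨hwA, h | h⟩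
          exacts [Or.inl h, Or.inr ⟨hwA, h⟩]
        · rintro (h | ⟨hwA, h⟩)
          exacts [⟨h ▸ hu, Or.inl h⟩, ⟨hwA, Or.inr h⟩]
      rw [h2, Finset.sum_insert (by simp [hsU]), if_pos hu]
    · have h2 : A ∩ insert ustar U = A ∩ U := by
        ext w; simp only [Finset.mem_insert, Finset.mem_inter]
        constructor
        · rintro ⟨hw, h | h⟩
          · exact absurd (h ▸ hw) hu
          · exact ⟨hw, h⟩
        · rintro ⟨hw, h⟩; exact ⟨hw, Or.inr h⟩
      rw [h2, if_neg hu]; omega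
  have deg2m : 2 * m = 2 * d + SU + 2 * TW + SW := by
    have h2m : ∑ v, Ghat.degree v = 2 * m := by
      rw [SimpleGraph.sum_degrees_eq_twice_card_edges, hm']
    rw [natSumSplit Finset.univ (fun v => Ghat.degree v)] at h2m
    simp only [Finset.mem_univ, if_pos, Finset.univ_inter] at h2m
    have hdu : Ghat.degree ustar = d := rfl
    have hU1 : ∑ v ∈ U, Ghat.degree v = d + SU + TW := by
      have : ∀ v ∈ U, Ghat.degree v
          = 1 + (U ∩ Ghat.neighborFinset v).card + (Wf ∩ Ghat.neighborFinset v).card := by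
        intro v hv
        have := cardSplit (Ghat.neighborFinset v)
        rw [if_pos ((Ghat.mem_neighborFinset v ustar).2 (hUadj v hv).symm),
          Finset.inter_comm (Ghat.neighborFinset v) U,
          Finset.inter_comm (Ghat.neighborFinset v) Wf] at this
        exact this
      rw [Finset.sum_congr rfl this, Finset.sum_add_distrib, Finset.sum_add_distrib,
        Finset.sum_const, smul_eq_mul, mul_one, ← hSU, swapCard Ghat U Wf, ← hTW, ← hd]
    have hW1 : ∑ w ∈ Wf, Ghat.degree w = TW + SW := by
      have : ∀ w ∈ Wf, Ghat.degree w
          = (U ∩ Ghat.neighborFinset w).card + (Wf ∩ Ghat.neighborFinset w).card := by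
        intro w hw
        have h3 := cardSplit (Ghat.neighborFinset w)
        rw [if_neg (fun hc => (hWnadj w hw) ((Ghat.mem_neighborFinset w ustar).1 hc).symm),
          Finset.inter_comm (Ghat.neighborFinset w) U,
          Finset.inter_comm (Ghat.neighborFinset w) Wf] at h3
        have hdeg : Ghat.degree w = (Ghat.neighborFinset w).card := rfl
        omega
      rw [Finset.sum_congr rfl this, Finset.sum_add_distrib, ← hTW, ← hSW]
    omega
  -- eigen identities
  have hxu : (0:ℝ) < x ustar := hpos ustar
  have lamId : lam * x ustar = ∑ v ∈ U, x v := heq ustar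
  have KeyId : lam^2 * x ustar = d * x ustar
      + (∑ v ∈ U, ((U ∩ Ghat.neighborFinset v).card : ℝ) * x v)
      + (∑ w ∈ Wf, ((U ∩ Ghat.neighborFinset w).card : ℝ) * x w) := by
    have e1 : lam^2 * x ustar = ∑ v ∈ U, (lam * x v) := by
      rw [pow_two, mul_assoc, lamId, Finset.mul_sum]
    have e2 : ∑ v ∈ U, (lam * x v) = ∑ v ∈ U, (x ustar
        + (∑ w ∈ U ∩ Ghat.neighborFinset v, x w)
        + (∑ w ∈ Wf ∩ Ghat.neighborFinset v, x w)) := by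
      refine Finset.sum_congr rfl (fun v hv => ?_)
      rw [heq v, sumSplit (Ghat.neighborFinset v) x,
        if_pos ((Ghat.mem_neighborFinset v ustar).2 (hUadj v hv).symm),
        Finset.inter_comm (Ghat.neighborFinset v) U,
        Finset.inter_comm (Ghat.neighborFinset v) Wf]
    rw [e1, e2, Finset.sum_add_distrib, Finset.sum_add_distrib, Finset.sum_const,
      nsmul_eq_mul, swapSum Ghat U U x, swapSum Ghat U Wf x, ← hd]
  -- generic bounds
  have sumBnd : ∀ (S : Finset V) (c : V → ℕ), (∑ v ∈ S, (c v : ℝ) * x v)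
      ≤ (∑ v ∈ S, (c v : ℝ)) * x ustar := by
    intro S c
    rw [Finset.sum_mul]
    refine Finset.sum_le_sum (fun v _ => ?_)
    exact mul_le_mul_of_nonneg_left (hmaxx v) (by positivity)
  have castbnd : ∀ (S : Finset V), (∑ v ∈ S, ((U ∩ Ghat.neighborFinset v).card : ℝ) * x v)
      ≤ (∑ v ∈ S, (U ∩ Ghat.neighborFinset v).card : ℕ) * x ustar := by
    intro S
    have := sumBnd S (fun v => (U ∩ Ghat.neighborFinset v).card)
    calc (∑ v ∈ S, ((U ∩ Ghat.neighborFinset v).card : ℝ) * x v)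
        ≤ (∑ v ∈ S, ((U ∩ Ghat.neighborFinset v).card : ℝ)) * x ustar := this
      _ = ((∑ v ∈ S, (U ∩ Ghat.neighborFinset v).card : ℕ) : ℝ) * x ustar := by
          push_cast; ring
  have cast2m : 2 * (m:ℝ) = 2*(d:ℝ) + SU + 2*TW + SW := by
    exact_mod_cast congrArg (fun n : ℕ => (n : ℝ)) deg2m
  have hSU13 : SW + 13 ≤ SU := by
    have hb : lam^2 * x ustar ≤ ((d : ℝ) + SU + TW) * x ustar := by
      rw [KeyId]
      have b1 := castbnd U
      have b2 := castbnd Wf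
      rw [← hSU] at b1
      rw [← hTW] at b2
      nlinarith [hpos ustar]
    have hb2 : lam^2 ≤ (d : ℝ) + SU + TW := le_of_mul_le_mul_right hb hxu
    have : (SW : ℝ) + 12 < SU := by nlinarith [cast2m]
    have : SW + 12 < SU := by exact_mod_cast this
    omega
  have QbndR : (∑ w ∈ Wf, ((U ∩ Ghat.neighborFinset w).card : ℝ) * x w) ≤ (TW:ℝ) * x ustar := by
    have := castbnd Wf; rw [← hTW] at this; exact this
  -- the H43-freeness workhorse: a path of length 2 in U plus a disjoint edge in U
  have lemB : ∀ a b c p q : V, a ∈ U → b ∈ U → c ∈ U → p ∈ U → q ∈ U →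
      a ≠ c → Ghat.Adj a b → Ghat.Adj b c → Ghat.Adj p q →
      p ≠ a → p ≠ b → p ≠ c → q ≠ a → q ≠ b → q ≠ c → False := by
    intro a b c p q ha hb hc hp hq hac hab hbc hpq hpa hpb hpc hqa hqb hqc
    exact hfree (h43_copy Ghat ustar a b c p q
      ((hUne a ha).symm) ((hUne b hb).symm) ((hUne c hc).symm) ((hUne p hp).symm)
      ((hUne q hq).symm)
      hab.ne hac hpa.symm hqa.symm hbc.ne hpb.symm hqb.symm hpc.symm hqc.symm hpq.ne
      (hUadj a ha) hab hbc ((hUadj c hc).symm) (hUadj p hp) hpq ((hUadj q hq).symm))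
  -- goal reduction to the finset Wf
  by_contra hC
  obtain ⟨w0, hw0⟩ := Set.nonempty_iff_ne_empty.2 hC
  have hw0W : w0 ∈ Wf := by
    rw [Wset, Set.mem_diff, Set.mem_union] at hw0
    rw [hWdef, Finset.mem_sdiff, Finset.mem_insert]
    refine ⟨Finset.mem_univ _, ?_⟩
    rintro (h | h)
    · exact hw0.2 (Or.inr (h ▸ rfl))
    · exact hw0.2 (Or.inl ((Ghat.mem_neighborFinset ustar w0).1 h))
  -- main case analysis
  by_cases hD4 : ∃ z ∈ U, 4 ≤ (U ∩ Ghat.neighborFinset z).card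
  · -- star case
    obtain ⟨z, hzU, hz4⟩ := hD4
    have starAll : ∀ v w, v ∈ U → w ∈ U → Ghat.Adj v w → z = v ∨ z = w := by
      intro v w hvU hwU hvw
      by_contra hcon
      push_neg at hcon
      obtain ⟨hzv, hzw⟩ := hcon
      have hcard2 : 2 ≤ ((U ∩ Ghat.neighborFinset z) \ {v, w}).card := by
        have h1 := Finset.card_le_card_sdiff_add_card (s := U ∩ Ghat.neighborFinset z)
          (t := ({v, w} : Finset V))
        have h2 : ({v, w} : Finset V).card ≤ 2 := by
          have i1 := Finset.card_insert_le v ({w} : Finset V)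
          have i2 : ({w} : Finset V).card = 1 := Finset.card_singleton w
          omega
        omega
      obtain ⟨a, ha, b, hb, hab⟩ := Finset.one_lt_card.1
        (by omega : 1 < ((U ∩ Ghat.neighborFinset z) \ {v, w}).card)
      obtain ⟨ha1, ha2⟩ := Finset.mem_sdiff.1 ha
      obtain ⟨hb1, hb2⟩ := Finset.mem_sdiff.1 hb
      simp only [Finset.mem_insert, Finset.mem_singleton] at ha2 hb2
      push_neg at ha2 hb2
      have haU : a ∈ U := (Finset.mem_inter.1 ha1).1
      have hbU : b ∈ U := (Finset.mem_inter.1 hb1).1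
      have hza : Ghat.Adj z a := (Ghat.mem_neighborFinset z a).1 (Finset.mem_inter.1 ha1).2
      have hzb : Ghat.Adj z b := (Ghat.mem_neighborFinset z b).1 (Finset.mem_inter.1 hb1).2
      exact lemB a z b v w haU hzU hbU hvU hwU hab hza.symm hzb hvw
        (fun h => ha2.1 h.symm) (fun h => hzv h.symm) (fun h => hb2.1 h.symm)
        (fun h => ha2.2 h.symm) (fun h => hzw h.symm) (fun h => hb2.2 h.symm)
    set L : Finset V := U ∩ Ghat.neighborFinset z with hLdef
    have hLU : L ⊆ U := Finset.inter_subset_left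
    have hzL : z ∉ L := by
      intro h
      exact Ghat.loopless.irrefl z ((Ghat.mem_neighborFinset z z).1 (Finset.mem_inter.1 h).2)
    have hLadj : ∀ ℓ ∈ L, Ghat.Adj z ℓ := by
      intro ℓ hℓ
      exact (Ghat.mem_neighborFinset z ℓ).1 (Finset.mem_inter.1 hℓ).2
    have hLsingle : ∀ ℓ ∈ L, U ∩ Ghat.neighborFinset ℓ = {z} := by
      intro ℓ hℓ
      ext w
      simp only [Finset.mem_singleton]
      constructor
      · intro hw
        obtain ⟨hwU, hwN⟩ := Finset.mem_inter.1 hw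
        have hlw : Ghat.Adj ℓ w := (Ghat.mem_neighborFinset ℓ w).1 hwN
        rcases starAll ℓ w (hLU hℓ) hwU hlw with h | h
        · exact absurd (h ▸ hℓ) hzL
        · exact h.symm
      · intro hwz
        rw [hwz]
        exact Finset.mem_inter.2 ⟨hzU, (Ghat.mem_neighborFinset ℓ z).2 (hLadj ℓ hℓ).symm⟩
    set U0 : Finset V := U \ insert z L with hU0def
    have hU0empty : ∀ v ∈ U0, U ∩ Ghat.neighborFinset v = ∅ := by
      intro v hv
      obtain ⟨hvU, hvT⟩ := Finset.mem_sdiff.1 hv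
      simp only [Finset.mem_insert] at hvT
      push_neg at hvT
      obtain ⟨hvz, hvL⟩ := hvT
      rw [Finset.eq_empty_iff_forall_notMem]
      intro w hw
      obtain ⟨hwU, hwN⟩ := Finset.mem_inter.1 hw
      have hvw : Ghat.Adj v w := (Ghat.mem_neighborFinset v w).1 hwN
      rcases starAll v w hvU hwU hvw with h | h
      · exact hvz h.symm
      · refine hvL (Finset.mem_inter.2 ⟨hvU, (Ghat.mem_neighborFinset z v).2 ?_⟩)
        rw [h]
        exact hvw.symm
    have hTsubU : insert z L ⊆ U := by
      intro t ht
      rcases Finset.mem_insert.1 ht with rfl | h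
      exacts [hzU, hLU h]
    have hUsplit : U ∩ insert z L = insert z L := Finset.inter_eq_right.2 hTsubU
    have SU2s : SU = 2 * L.card := by
      have hsplit : (∑ v ∈ U ∩ insert z L, (U ∩ Ghat.neighborFinset v).card)
          + (∑ v ∈ U \ insert z L, (U ∩ Ghat.neighborFinset v).card) = SU :=
        Finset.sum_inter_add_sum_sdiff U _ _
      have h0 : (∑ v ∈ U \ insert z L, (U ∩ Ghat.neighborFinset v).card) = 0 := by
        refine Finset.sum_eq_zero (fun v hv => ?_)
        rw [hU0empty v (hU0def ▸ hv)]; rfl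
      have h1 : (∑ v ∈ U ∩ insert z L, (U ∩ Ghat.neighborFinset v).card)
          = L.card + L.card := by
        rw [hUsplit, Finset.sum_insert hzL, ← hLdef]
        have h2 : ∀ ℓ ∈ L, (U ∩ Ghat.neighborFinset ℓ).card = 1 := by
          intro ℓ hℓ
          rw [hLsingle ℓ hℓ, Finset.card_singleton]
        rw [Finset.sum_congr rfl h2, Finset.sum_const, smul_eq_mul, mul_one]
      omega
    have hs7 : 7 ≤ L.card := by omega
    -- real sum computations in the star case
    set QR : ℝ := ∑ w ∈ Wf, ((U ∩ Ghat.neighborFinset w).card : ℝ) * x w with hQRdef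
    have PU : (∑ v ∈ U, ((U ∩ Ghat.neighborFinset v).card : ℝ) * x v)
        = (L.card : ℝ) * x z + ∑ ℓ ∈ L, x ℓ := by
      have hsplit : (∑ v ∈ U ∩ insert z L, ((U ∩ Ghat.neighborFinset v).card : ℝ) * x v)
          + (∑ v ∈ U \ insert z L, ((U ∩ Ghat.neighborFinset v).card : ℝ) * x v)
          = ∑ v ∈ U, ((U ∩ Ghat.neighborFinset v).card : ℝ) * x v :=
        Finset.sum_inter_add_sum_sdiff U _ _
      have h0 : (∑ v ∈ U \ insert z L, ((U ∩ Ghat.neighborFinset v).card : ℝ) * x v) = 0 := by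
        refine Finset.sum_eq_zero (fun v hv => ?_)
        rw [hU0empty v (hU0def ▸ hv)]
        simp
      have h1 : (∑ v ∈ U ∩ insert z L, ((U ∩ Ghat.neighborFinset v).card : ℝ) * x v)
          = (L.card : ℝ) * x z + ∑ ℓ ∈ L, x ℓ := by
        rw [hUsplit, Finset.sum_insert hzL, ← hLdef]
        congr 1
        rw [show (∑ ℓ ∈ L, ((U ∩ Ghat.neighborFinset ℓ).card : ℝ) * x ℓ)
            = ∑ ℓ ∈ L, x ℓ from Finset.sum_congr rfl (fun ℓ hℓ => by
          rw [hLsingle ℓ hℓ, Finset.card_singleton]; simp)]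
      rw [← hsplit, h0, h1, add_zero]
    have SXU : (∑ v ∈ U, x v) = x z + (∑ ℓ ∈ L, x ℓ) + (∑ v ∈ U0, x v) := by
      have hsplit : (∑ v ∈ U ∩ insert z L, x v) + (∑ v ∈ U \ insert z L, x v)
          = ∑ v ∈ U, x v := Finset.sum_inter_add_sum_sdiff U _ _
      rw [← hsplit, hUsplit, Finset.sum_insert hzL, hU0def]
    have KeyStar : lam^2 * x ustar = (d:ℝ) * x ustar + (L.card : ℝ) * x z
        + (∑ ℓ ∈ L, x ℓ) + QR := by
      rw [KeyId, PU, hQRdef]; ring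
    have lamIdStar : lam * x ustar = x z + (∑ ℓ ∈ L, x ℓ) + (∑ v ∈ U0, x v) := by
      rw [lamId, SXU]
    -- Pass A : SW = 0
    have hLcast : (7:ℝ) ≤ (L.card : ℝ) := by exact_mod_cast hs7
    have hxz : x z ≤ x ustar := hmaxx z
    have hU0nonneg : (0:ℝ) ≤ ∑ v ∈ U0, x v :=
      Finset.sum_nonneg (fun v _ => (hpos v).le)
    have hQRbnd : QR ≤ (TW:ℝ) * x ustar := QbndR
    have hA : lam^2 - lam ≤ (d:ℝ) + ((L.card:ℝ) - 1) + TW := by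
      have e : lam^2 * x ustar - lam * x ustar = (d:ℝ) * x ustar
          + ((L.card:ℝ) - 1) * x z - (∑ v ∈ U0, x v) + QR := by
        linear_combination KeyStar - lamIdStar
      have hb1 : ((L.card:ℝ) - 1) * x z ≤ ((L.card:ℝ) - 1) * x ustar :=
        mul_le_mul_of_nonneg_left hxz (by linarith)
      have e2 : (lam^2 - lam) * x ustar ≤ ((d:ℝ) + ((L.card:ℝ) - 1) + TW) * x ustar := by
        nlinarith
      exact le_of_mul_le_mul_right e2 hxu
    have hSUcast : (SU:ℝ) = 2 * (L.card:ℝ) := by exact_mod_cast SU2s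
    have hSW1 : SW ≤ 1 := by
      have h2r : (SW:ℝ) < 2 := by nlinarith [cast2m, hl2, hA, hSUcast]
      have h2n : SW < 2 := by exact_mod_cast h2r
      omega
    have hSW0 : SW = 0 := by
      by_contra hne
      have h2 : 2 ≤ SW := by
        obtain ⟨w, hw, hne0⟩ := Finset.exists_ne_zero_of_sum_ne_zero (hSW ▸ hne)
        obtain ⟨w', hw'⟩ := Finset.card_pos.1 (Nat.pos_of_ne_zero hne0)
        obtain ⟨hw'W, hw'N⟩ := Finset.mem_inter.1 hw'
        have hadj : Ghat.Adj w w' := (Ghat.mem_neighborFinset w w').1 hw'N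
        have hne' : w ≠ w' := hadj.ne
        have hf1 : 1 ≤ (Wf ∩ Ghat.neighborFinset w).card := Nat.pos_of_ne_zero hne0
        have hf2 : 1 ≤ (Wf ∩ Ghat.neighborFinset w').card :=
          Finset.card_pos.2 ⟨w, Finset.mem_inter.2
            ⟨hw, (Ghat.mem_neighborFinset w' w).2 hadj.symm⟩⟩
        have hsub : ({w, w'} : Finset V) ⊆ Wf := by
          intro t ht
          rcases Finset.mem_insert.1 ht with rfl | ht
          · exact hw
          · rw [Finset.mem_singleton.1 ht]; exact hw'W
        calc 2 ≤ (Wf ∩ Ghat.neighborFinset w).card + (Wf ∩ Ghat.neighborFinset w').card := by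
              omega
          _ = ∑ t ∈ ({w, w'} : Finset V), (Wf ∩ Ghat.neighborFinset t).card :=
              (Finset.sum_pair (f := fun t => (Wf ∩ Ghat.neighborFinset t).card) hne').symm
          _ ≤ SW := by
              rw [hSW]
              exact Finset.sum_le_sum_of_subset hsub
      omega
    have hWfin : ∀ t ∈ Wf, (Wf ∩ Ghat.neighborFinset t).card = 0 := by
      intro t ht
      have h9 := Finset.single_le_sum (f := fun t => (Wf ∩ Ghat.neighborFinset t).card)
        (fun i _ => Nat.zero_le _) ht
      omega
    have htri : ∀ v : V, v = ustar ∨ v ∈ U ∨ v ∈ Wf := by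
      intro v
      by_cases h1 : v = ustar
      · exact Or.inl h1
      by_cases h2 : v ∈ U
      · exact Or.inr (Or.inl h2)
      refine Or.inr (Or.inr (Finset.mem_sdiff.2 ⟨Finset.mem_univ v, fun h => ?_⟩))
      rcases Finset.mem_insert.1 h with h | h
      exacts [h1 h, h2 h]
    have hWU : ∀ w ∈ Wf, Ghat.neighborFinset w ⊆ U := by
      intro w hw nb hnb
      have hadj : Ghat.Adj w nb := (Ghat.mem_neighborFinset w nb).1 hnb
      rcases htri nb with rfl | h | h
      · exact absurd ((Ghat.mem_neighborFinset nb w).2 hadj.symm) (hWne w hw).2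
      · exact h
      · exfalso
        have : (Wf ∩ Ghat.neighborFinset w).card ≠ 0 :=
          Finset.card_ne_zero_of_mem (Finset.mem_inter.2 ⟨h, hnb⟩)
        exact this (hWfin w hw)
    have hdUW1 : ∀ w ∈ Wf, 1 ≤ (U ∩ Ghat.neighborFinset w).card := by
      intro w hw
      obtain ⟨nb, hnb⟩ := hmem w
      have hnbN : nb ∈ Ghat.neighborFinset w := (Ghat.mem_neighborFinset w nb).2 hnb
      exact Finset.card_pos.2 ⟨nb, Finset.mem_inter.2 ⟨hWU w hw hnbN, hnbN⟩⟩
    have hWcard : Wf.card ≤ TW := by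
      rw [hTW]
      calc Wf.card = ∑ _w ∈ Wf, 1 := by rw [Finset.sum_const, smul_eq_mul, mul_one]
        _ ≤ ∑ w ∈ Wf, (U ∩ Ghat.neighborFinset w).card := Finset.sum_le_sum hdUW1
    have hWfpos : 1 ≤ Wf.card := Finset.card_pos.2 ⟨w0, hw0W⟩
    -- no vertex of W has two neighbours in U unless one of them is the centre z
    have hpairz : ∀ w ∈ Wf, ∀ p q, p ∈ U ∩ Ghat.neighborFinset w →
        q ∈ U ∩ Ghat.neighborFinset w → p ≠ q → z = p ∨ z = q := by
      intro w hw p q hp hq hpq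
      by_contra hcon
      push_neg at hcon
      obtain ⟨hzp, hzq⟩ := hcon
      have hcard : 1 ≤ (L \ ({p, q} : Finset V)).card := by
        have h1 := Finset.card_le_card_sdiff_add_card (s := L) (t := ({p, q} : Finset V))
        have h2 : ({p, q} : Finset V).card ≤ 2 := by
          have i1 := Finset.card_insert_le p ({q} : Finset V)
          have i2 : ({q} : Finset V).card = 1 := Finset.card_singleton q
          omega
        omega
      obtain ⟨ℓ, hℓ⟩ := Finset.card_pos.1
        (by omega : 0 < (L \ ({p, q} : Finset V)).card)
      obtain ⟨hℓL, hℓpq⟩ := Finset.mem_sdiff.1 hℓ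
      simp only [Finset.mem_insert, Finset.mem_singleton] at hℓpq
      push_neg at hℓpq
      have hpU : p ∈ U := (Finset.mem_inter.1 hp).1
      have hqU : q ∈ U := (Finset.mem_inter.1 hq).1
      have hpN : Ghat.Adj w p := (Ghat.mem_neighborFinset w p).1 (Finset.mem_inter.1 hp).2
      have hqN : Ghat.Adj w q := (Ghat.mem_neighborFinset w q).1 (Finset.mem_inter.1 hq).2
      have hℓU : ℓ ∈ U := hLU hℓL
      exact hfree (h43_copy Ghat ustar p w q z ℓ
        ((hUne p hpU).symm) ((hWne w hw).1.symm) ((hUne q hqU).symm)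
        ((hUne z hzU).symm) ((hUne ℓ hℓU).symm)
        (fun h => hUW p hpU (h ▸ hw)) hpq (fun h => hzp h.symm) (fun h => hℓpq.1 h.symm)
        (fun h => hUW q hqU (h.symm ▸ hw))
        (fun h => hUW z hzU (h.symm ▸ hw)) (fun h => hUW ℓ hℓU (h.symm ▸ hw))
        (fun h => hzq h.symm) (fun h => hℓpq.2 h.symm)
        (hLadj ℓ hℓL).ne
        (hUadj p hpU) hpN.symm hqN ((hUadj q hqU).symm)
        (hUadj z hzU) (hLadj ℓ hℓL) ((hUadj ℓ hℓU).symm))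
    have hdUW2 : ∀ w ∈ Wf, (U ∩ Ghat.neighborFinset w).card ≤ 2 := by
      intro w hw
      by_contra hgt
      push_neg at hgt
      obtain ⟨p, q, r, hp, hq, hr, hpq, hpr, hqr⟩ := Finset.two_lt_card_iff.1 hgt
      by_cases hzp : z = p
      · rcases hpairz w hw q r hq hr hqr with h | h
        · exact hpq (hzp.symm.trans h)
        · exact hpr (hzp.symm.trans h)
      · by_cases hzq : z = q
        · rcases hpairz w hw p r hp hr hpr with h | h
          · exact hzp h
          · exact hqr (hzq.symm.trans h)
        · rcases hpairz w hw p q hp hq hpq with h | h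
          exacts [hzp h, hzq h]
    -- a W-vertex cannot be adjacent both to the centre and to a leaf
    have hleaf : ∀ w ∈ Wf, z ∈ Ghat.neighborFinset w →
        ∀ t ∈ L, t ∉ Ghat.neighborFinset w := by
      intro w hw hzN t htL htN
      have hL2 : 2 ≤ (L \ ({t} : Finset V)).card := by
        have h1 := Finset.card_le_card_sdiff_add_card (s := L) (t := ({t} : Finset V))
        have h2 : ({t} : Finset V).card = 1 := Finset.card_singleton t
        omega
      obtain ⟨l1, h1, l2, h2, h12⟩ := Finset.one_lt_card.1 (by omega : 1 < (L \ ({t} : Finset V)).card)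
      obtain ⟨h1L, h1t⟩ := Finset.mem_sdiff.1 h1
      obtain ⟨h2L, h2t⟩ := Finset.mem_sdiff.1 h2
      simp only [Finset.mem_singleton] at h1t h2t
      have htU : t ∈ U := hLU htL
      have h1U : l1 ∈ U := hLU h1L
      have h2U : l2 ∈ U := hLU h2L
      have hwz : Ghat.Adj w z := (Ghat.mem_neighborFinset w z).1 hzN
      have hwt : Ghat.Adj w t := (Ghat.mem_neighborFinset w t).1 htN
      exact hfree (h43_copy Ghat z l1 ustar l2 w t
        (hLadj l1 h1L).ne (hUne z hzU) (hLadj l2 h2L).ne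
        (fun h => hUW z hzU (h ▸ hw)) (fun h => hzL (h ▸ htL))
        (hUne l1 h1U) h12 (fun h => hUW l1 h1U (h ▸ hw)) h1t
        ((hUne l2 h2U).symm) ((hWne w hw).1.symm) ((hUne t htU).symm)
        (fun h => hUW l2 h2U (h ▸ hw)) h2t
        (fun h => hUW t htU (h.symm ▸ hw))
        (hLadj l1 h1L) ((hUadj l1 h1U).symm) (hUadj l2 h2U) ((hLadj l2 h2L).symm)
        hwz.symm hwt ((hLadj t htL).symm))
    -- Pass B : numeric endgame
    have hNweq : ∀ w ∈ Wf, U ∩ Ghat.neighborFinset w = Ghat.neighborFinset w := by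
      intro w hw
      exact Finset.inter_eq_right.2 (hWU w hw)
    have hlamxw : ∀ w ∈ Wf, lam * x w = ∑ nb ∈ U ∩ Ghat.neighborFinset w, x nb := by
      intro w hw
      rw [heq w, hNweq w hw]
    have hlamxw2 : ∀ w ∈ Wf, lam * x w ≤ ((U ∩ Ghat.neighborFinset w).card : ℝ) * x ustar := by
      intro w hw
      rw [hlamxw w hw]
      calc (∑ nb ∈ U ∩ Ghat.neighborFinset w, x nb)
          ≤ ∑ _nb ∈ U ∩ Ghat.neighborFinset w, x ustar :=
            Finset.sum_le_sum (fun nb _ => hmaxx nb)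
        _ = ((U ∩ Ghat.neighborFinset w).card : ℝ) * x ustar := by
            rw [Finset.sum_const, nsmul_eq_mul]
    have hlamQ : lam * QR ≤ 2 * (TW:ℝ) * x ustar := by
      have e : lam * QR = ∑ w ∈ Wf, ((U ∩ Ghat.neighborFinset w).card : ℝ) * (lam * x w) := by
        rw [hQRdef, Finset.mul_sum]
        exact Finset.sum_congr rfl (fun w _ => by ring)
      rw [e]
      calc (∑ w ∈ Wf, ((U ∩ Ghat.neighborFinset w).card : ℝ) * (lam * x w))
          ≤ ∑ w ∈ Wf, (2:ℝ) * (((U ∩ Ghat.neighborFinset w).card : ℝ) * x ustar) := by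
            refine Finset.sum_le_sum (fun w hw => ?_)
            have hc2 : ((U ∩ Ghat.neighborFinset w).card : ℝ) ≤ 2 := by
              exact_mod_cast hdUW2 w hw
            have hc0 : (0:ℝ) ≤ ((U ∩ Ghat.neighborFinset w).card : ℝ) := Nat.cast_nonneg _
            have hxw := hlamxw2 w hw
            calc ((U ∩ Ghat.neighborFinset w).card : ℝ) * (lam * x w)
                ≤ ((U ∩ Ghat.neighborFinset w).card : ℝ)
                    * (((U ∩ Ghat.neighborFinset w).card : ℝ) * x ustar) :=
                  mul_le_mul_of_nonneg_left hxw hc0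
              _ ≤ 2 * (((U ∩ Ghat.neighborFinset w).card : ℝ) * x ustar) :=
                  mul_le_mul_of_nonneg_right hc2 (mul_nonneg hc0 hxu.le)
        _ = 2 * (TW:ℝ) * x ustar := by
            rw [← Finset.mul_sum, ← Finset.sum_mul]
            have : (∑ w ∈ Wf, ((U ∩ Ghat.neighborFinset w).card : ℝ)) = (TW:ℝ) := by
              rw [hTW]; push_cast; ring
            rw [this]; ring
    have hlamU0 : ((U0.card : ℝ)) * x ustar ≤ lam * ∑ v ∈ U0, x v := by
      rw [Finset.mul_sum]
      calc ((U0.card : ℝ)) * x ustar = ∑ _v ∈ U0, x ustar := by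
            rw [Finset.sum_const, nsmul_eq_mul]
        _ ≤ ∑ v ∈ U0, lam * x v := by
            refine Finset.sum_le_sum (fun v hv => ?_)
            rw [heq v]
            have hvU : v ∈ U := (Finset.mem_sdiff.1 (hU0def ▸ hv)).1
            exact Finset.single_le_sum (f := fun i => x i) (fun i _ => (hpos i).le)
              ((Ghat.mem_neighborFinset v ustar).2 (hUadj v hvU).symm)
    have hmds : m = d + L.card + TW := by omega
    have hmcast : (m:ℝ) = (d:ℝ) + (L.card:ℝ) + (TW:ℝ) := by exact_mod_cast hmds
    have hprod : lam * (lam^2 * x ustar) - lam * (lam * x ustar)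
        = lam * ((d:ℝ) * x ustar) + lam * (((L.card:ℝ) - 1) * x z)
          - lam * (∑ v ∈ U0, x v) + lam * QR := by
      linear_combination lam * KeyStar - lam * lamIdStar
    have hlamnn : (0:ℝ) < lam := by linarith
    have hBineq : ∀ QB : ℝ, lam * QR ≤ QB * x ustar →
        lam * ((m:ℝ) - 2) < lam * ((d:ℝ) + (L.card:ℝ) - 1) + QB - (U0.card:ℝ) := by
      intro QB hQB
      have h0 : (0:ℝ) ≤ lam * ((L.card:ℝ) - 1) := by
        have : (0:ℝ) ≤ (L.card:ℝ) - 1 := by linarith only [hLcast]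
        have hln : (0:ℝ) ≤ lam := by linarith only [hl8]
        exact mul_nonneg hln this
      have hb1 : lam * (((L.card:ℝ) - 1) * x z) ≤ (lam * ((L.card:ℝ) - 1)) * x ustar := by
        calc lam * (((L.card:ℝ) - 1) * x z) = (lam * ((L.card:ℝ) - 1)) * x z := by ring
          _ ≤ (lam * ((L.card:ℝ) - 1)) * x ustar := mul_le_mul_of_nonneg_left hxz h0
      have hlhs : lam * ((m:ℝ) - 2) * x ustar
          < lam * (lam^2 * x ustar) - lam * (lam * x ustar) := by
        have h1 : ((m:ℝ) - 2) * x ustar < (lam^2 - lam) * x ustar :=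
          mul_lt_mul_of_pos_right hl2 hxu
        calc lam * ((m:ℝ) - 2) * x ustar = lam * (((m:ℝ) - 2) * x ustar) := by ring
          _ < lam * ((lam^2 - lam) * x ustar) := by
              exact mul_lt_mul_of_pos_left h1 hlamnn
          _ = lam * (lam^2 * x ustar) - lam * (lam * x ustar) := by ring
      have hrhs : lam * (lam^2 * x ustar) - lam * (lam * x ustar)
          ≤ (lam * ((d:ℝ) + (L.card:ℝ) - 1) + QB - (U0.card:ℝ)) * x ustar := by
        rw [hprod]
        linarith only [hlamU0, hb1, hQB]
      have hfin := lt_of_lt_of_le hlhs hrhs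
      exact lt_of_mul_lt_mul_right hfin hxu.le
    have hTW1 : TW ≤ 1 := by
      by_contra hTWc
      push_neg at hTWc
      have hTWr : (2:ℝ) ≤ (TW:ℝ) := by exact_mod_cast hTWc
      have hB := hBineq (2 * (TW:ℝ)) hlamQ
      rw [hmcast] at hB
      have hU0nn : (0:ℝ) ≤ (U0.card:ℝ) := Nat.cast_nonneg _
      have key : (0:ℝ) ≤ (lam - 8) * ((TW:ℝ) - 1) :=
        mul_nonneg (by linarith only [hl8]) (by linarith only [hTWr])
      nlinarith [hB, key, hTWr, hU0nn]
    have hTWeq : TW = 1 := by omega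
    obtain ⟨w1, hw1⟩ := Finset.card_eq_one.1 (by omega : Wf.card = 1)
    have hw1W : w1 ∈ Wf := by rw [hw1]; exact Finset.mem_singleton_self w1
    have hc1 : (U ∩ Ghat.neighborFinset w1).card = 1 := by
      have : TW = (U ∩ Ghat.neighborFinset w1).card := by
        rw [hTW, hw1, Finset.sum_singleton]
      omega
    have hQReq : QR = x w1 := by
      rw [hQRdef, hw1, Finset.sum_singleton, hc1, Nat.cast_one, one_mul]
    have hlamQ1 : lam * QR ≤ (1:ℝ) * x ustar := by
      rw [hQReq]
      have := hlamxw2 w1 hw1W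
      rw [hc1] at this
      simpa using this
    have hU00 : U0.card = 0 := by
      have hB := hBineq 1 hlamQ1
      rw [hmcast] at hB
      have hTWr : (TW:ℝ) = 1 := by exact_mod_cast hTWeq
      rw [hTWr] at hB
      have hlt : ((U0.card:ℕ):ℝ) < 1 := by nlinarith [hB]
      have : U0.card < 1 := by exact_mod_cast hlt
      omega
    have hdcard : d = 1 + L.card := by
      have hsplit := Finset.card_inter_add_card_sdiff U (insert z L)
      rw [hUsplit, Finset.card_insert_of_notMem hzL] at hsplit
      have hU0c : (U \ insert z L).card = 0 := hU0def ▸ hU00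
      omega
    obtain ⟨k, hk⟩ := hodd
    omega
  · push_neg at hD4
    by_cases hD1 : ∀ v ∈ U, (U ∩ Ghat.neighborFinset v).card ≤ 1
    · -- matching case
      have hP : (∑ v ∈ U, ((U ∩ Ghat.neighborFinset v).card : ℝ) * x v) ≤ ∑ v ∈ U, x v := by
        refine Finset.sum_le_sum (fun v hv => ?_)
        have h1 : ((U ∩ Ghat.neighborFinset v).card : ℝ) ≤ 1 := by
          exact_mod_cast hD1 v hv
        nlinarith [hpos v]
      have h1 : lam^2 * x ustar ≤ (d:ℝ)*x ustar + lam * x ustar + TW * x ustar := by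
        rw [KeyId, ← lamId] at *
        linarith [QbndR, hP]
      have h2 : lam^2 - lam ≤ (d:ℝ) + TW :=
        le_of_mul_le_mul_right (by linarith : (lam^2 - lam) * x ustar ≤ ((d:ℝ) + TW) * x ustar) hxu
      have h3 : (SU:ℝ) + SW < 4 := by linarith [cast2m, hl2]
      have h4 : SU + SW < 4 := by exact_mod_cast h3
      omega
    · push_neg at hD1
      obtain ⟨z, hzU, hz2⟩ := hD1
      obtain ⟨n1, hn1, n2, hn2, hn12⟩ := Finset.one_lt_card.1 (by omega : 1 < (U ∩ Ghat.neighborFinset z).card)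
      have hn1U : n1 ∈ U := (Finset.mem_inter.1 hn1).1
      have hn2U : n2 ∈ U := (Finset.mem_inter.1 hn2).1
      have hzn1 : Ghat.Adj z n1 := (Ghat.mem_neighborFinset z n1).1 (Finset.mem_inter.1 hn1).2
      have hzn2 : Ghat.Adj z n2 := (Ghat.mem_neighborFinset z n2).1 (Finset.mem_inter.1 hn2).2
      by_cases hD3 : ∃ z' ∈ U, (U ∩ Ghat.neighborFinset z').card = 3
      · obtain ⟨z', hz'U, hz'3⟩ := hD3
        obtain ⟨a, b, c, hab, hac, hbc, hS⟩ := Finset.card_eq_three.1 hz'3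
        have hmem3 : ∀ w, w ∈ U ∩ Ghat.neighborFinset z' ↔ (w = a ∨ w = b ∨ w = c) := by
          intro w; rw [hS]; simp
        have haU : a ∈ U := (Finset.mem_inter.1 ((hmem3 a).2 (Or.inl rfl))).1
        have hbU : b ∈ U := (Finset.mem_inter.1 ((hmem3 b).2 (Or.inr (Or.inl rfl)))).1
        have hcU : c ∈ U := (Finset.mem_inter.1 ((hmem3 c).2 (Or.inr (Or.inr rfl)))).1
        have hza : Ghat.Adj z' a := (Ghat.mem_neighborFinset z' a).1
          (Finset.mem_inter.1 ((hmem3 a).2 (Or.inl rfl))).2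
        have hzb : Ghat.Adj z' b := (Ghat.mem_neighborFinset z' b).1
          (Finset.mem_inter.1 ((hmem3 b).2 (Or.inr (Or.inl rfl)))).2
        have hzc : Ghat.Adj z' c := (Ghat.mem_neighborFinset z' c).1
          (Finset.mem_inter.1 ((hmem3 c).2 (Or.inr (Or.inr rfl)))).2
        have claimIn : ∀ v w, v ∈ U → w ∈ U → Ghat.Adj v w → z' ≠ v → z' ≠ w →
            v = a ∨ v = b ∨ v = c := by
          intro v w hvU hwU hvw hz'v hz'w
          by_contra hv
          push_neg at hv
          obtain ⟨hva, hvb, hvc⟩ := hv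
          by_cases hw : w = a ∨ w = b ∨ w = c
          · rcases hw with rfl | rfl | rfl
            · exact lemB b z' c v w hbU hz'U hcU hvU hwU hbc hzb.symm hzc hvw
                hvb (Ne.symm hz'v) hvc hab (Ne.symm hz'w) hac
            · exact lemB a z' c v w haU hz'U hcU hvU hwU hac hza.symm hzc hvw
                hva (Ne.symm hz'v) hvc hab.symm (Ne.symm hz'w) hbc
            · exact lemB a z' b v w haU hz'U hbU hvU hwU hab hza.symm hzb hvw
                hva (Ne.symm hz'v) hvb hac.symm (Ne.symm hz'w) hbc.symm
          · push_neg at hw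
            obtain ⟨hwa, hwb, hwc⟩ := hw
            exact lemB a z' b v w haU hz'U hbU hvU hwU hab hza.symm hzb hvw
              hva (Ne.symm hz'v) hvb hwa (Ne.symm hz'w) hwb
        have hzero : ∀ v ∈ U, v ∉ insert z' ({a, b, c} : Finset V) →
            U ∩ Ghat.neighborFinset v = ∅ := by
          intro v hvU hvT
          simp only [Finset.mem_insert] at hvT
          push_neg at hvT
          obtain ⟨hvz', hvT⟩ := hvT
          rw [Finset.eq_empty_iff_forall_notMem]
          intro w hw
          obtain ⟨hwU, hwN⟩ := Finset.mem_inter.1 hw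
          have hvw : Ghat.Adj v w := (Ghat.mem_neighborFinset v w).1 hwN
          by_cases hwz : w = z'
          · subst hwz
            have : v ∈ U ∩ Ghat.neighborFinset w :=
              Finset.mem_inter.2 ⟨hvU, (Ghat.mem_neighborFinset w v).2 hvw.symm⟩
            have h9 := (hmem3 v).1 this
            simp only [Finset.mem_insert, Finset.mem_singleton] at hvT
            push_neg at hvT
            rcases h9 with h | h | h
            exacts [hvT.1 h, hvT.2.1 h, hvT.2.2 h]
          · have h9 := claimIn v w hvU hwU hvw (fun h => hvz' h.symm) (fun h => hwz h.symm)
            simp only [Finset.mem_insert, Finset.mem_singleton] at hvT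
            push_neg at hvT
            rcases h9 with h | h | h
            exacts [hvT.1 h, hvT.2.1 h, hvT.2.2 h]
        have hSUle : SU ≤ 12 := by
          have hsplit : (∑ v ∈ U ∩ insert z' ({a,b,c} : Finset V), (U ∩ Ghat.neighborFinset v).card)
              + (∑ v ∈ U \ insert z' ({a,b,c} : Finset V), (U ∩ Ghat.neighborFinset v).card) = SU :=
            Finset.sum_inter_add_sum_sdiff U _ _
          have h0 : (∑ v ∈ U \ insert z' ({a,b,c} : Finset V), (U ∩ Ghat.neighborFinset v).card) = 0 := by
            refine Finset.sum_eq_zero (fun v hv => ?_)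
            obtain ⟨hvU, hvT⟩ := Finset.mem_sdiff.1 hv
            rw [hzero v hvU hvT]; rfl
          have h1 : (∑ v ∈ U ∩ insert z' ({a,b,c} : Finset V), (U ∩ Ghat.neighborFinset v).card)
              ≤ 3 * 4 := by
            calc (∑ v ∈ U ∩ insert z' ({a,b,c} : Finset V), (U ∩ Ghat.neighborFinset v).card)
                ≤ ∑ _v ∈ U ∩ insert z' ({a,b,c} : Finset V), 3 :=
                  Finset.sum_le_sum (fun v hv => by
                    have := hD4 v (Finset.mem_inter.1 hv).1; omega)
              _ = (U ∩ insert z' ({a,b,c} : Finset V)).card * 3 := by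
                  rw [Finset.sum_const, smul_eq_mul]
              _ ≤ 4 * 3 := by
                  have : (U ∩ insert z' ({a,b,c} : Finset V)).card
                      ≤ (insert z' ({a,b,c} : Finset V)).card :=
                    Finset.card_le_card (Finset.inter_subset_right)
                  have h5 : ({a,b,c} : Finset V).card ≤ 3 := by
                    have i1 := Finset.card_insert_le a (insert b ({c} : Finset V))
                    have i2 := Finset.card_insert_le b ({c} : Finset V)
                    have i3 : ({c} : Finset V).card = 1 := Finset.card_singleton c
                    omega
                  have h4 : (insert z' ({a,b,c} : Finset V)).card ≤ 4 := by
                    have i0 := Finset.card_insert_le z' ({a,b,c} : Finset V)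
                    omega
                  omega
              _ = 3 * 4 := by ring
          omega
        omega
      · -- all U-degrees at most 2
        have hD2 : ∀ v ∈ U, (U ∩ Ghat.neighborFinset v).card ≤ 2 := by
          intro v hv
          have h3 := hD4 v hv
          rcases Nat.lt_or_ge (U ∩ Ghat.neighborFinset v).card 3 with h | h
          · omega
          · exact absurd ⟨v, hv, by omega⟩ hD3
        have hSeq : U ∩ Ghat.neighborFinset z = {n1, n2} := by
          refine (Finset.eq_of_subset_of_card_le ?_ ?_).symm
          · intro w hw
            simp only [Finset.mem_insert, Finset.mem_singleton] at hw
            rcases hw with rfl | rfl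
            exacts [hn1, hn2]
          · rw [Finset.card_pair hn12]
            exact hD2 z hzU
        have hzn1' : z ≠ n1 := hzn1.ne
        have hzn2' : z ≠ n2 := hzn2.ne
        have hsub : ∀ v ∈ U, v ∉ insert z ({n1, n2} : Finset V) →
            U ∩ Ghat.neighborFinset v ⊆ {n1, n2} := by
          intro v hvU hvT w hw
          simp only [Finset.mem_insert, Finset.mem_singleton] at hvT
          push_neg at hvT
          obtain ⟨hvz, hv1, hv2⟩ := hvT
          obtain ⟨hwU, hwN⟩ := Finset.mem_inter.1 hw
          have hvw : Ghat.Adj v w := (Ghat.mem_neighborFinset v w).1 hwN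
          simp only [Finset.mem_insert, Finset.mem_singleton]
          by_contra hwm
          push_neg at hwm
          obtain ⟨hw1, hw2⟩ := hwm
          by_cases hwz : w = z
          · subst hwz
            have : v ∈ U ∩ Ghat.neighborFinset w :=
              Finset.mem_inter.2 ⟨hvU, (Ghat.mem_neighborFinset w v).2 hvw.symm⟩
            rw [hSeq] at this
            simp only [Finset.mem_insert, Finset.mem_singleton] at this
            rcases this with h | h
            exacts [hv1 h, hv2 h]
          · exact lemB n1 z n2 v w hn1U hzU hn2U hvU hwU hn12 hzn1.symm hzn2 hvw
              hv1 hvz hv2 hw1 hwz hw2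
        have hSUle : SU ≤ 10 := by
          have hsplit : (∑ v ∈ U ∩ insert z ({n1,n2} : Finset V), (U ∩ Ghat.neighborFinset v).card)
              + (∑ v ∈ U \ insert z ({n1,n2} : Finset V), (U ∩ Ghat.neighborFinset v).card) = SU :=
            Finset.sum_inter_add_sum_sdiff U _ _
          have h1 : (∑ v ∈ U ∩ insert z ({n1,n2} : Finset V), (U ∩ Ghat.neighborFinset v).card)
              ≤ 6 := by
            calc (∑ v ∈ U ∩ insert z ({n1,n2} : Finset V), (U ∩ Ghat.neighborFinset v).card)
                ≤ ∑ _v ∈ U ∩ insert z ({n1,n2} : Finset V), 2 :=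
                  Finset.sum_le_sum (fun v hv => hD2 v (Finset.mem_inter.1 hv).1)
              _ = (U ∩ insert z ({n1,n2} : Finset V)).card * 2 := by
                  rw [Finset.sum_const, smul_eq_mul]
              _ ≤ 3 * 2 := by
                  have h2 : (U ∩ insert z ({n1,n2} : Finset V)).card
                      ≤ (insert z ({n1,n2} : Finset V)).card :=
                    Finset.card_le_card (Finset.inter_subset_right)
                  have h3 : (insert z ({n1,n2} : Finset V)).card ≤ 3 := by
                    have i0 := Finset.card_insert_le z ({n1,n2} : Finset V)
                    have i1 := Finset.card_insert_le n1 ({n2} : Finset V)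
                    have i2 : ({n2} : Finset V).card = 1 := Finset.card_singleton n2
                    omega
                  omega
              _ = 6 := by ring
          have h2 : (∑ v ∈ U \ insert z ({n1,n2} : Finset V), (U ∩ Ghat.neighborFinset v).card)
              ≤ 4 := by
            calc (∑ v ∈ U \ insert z ({n1,n2} : Finset V), (U ∩ Ghat.neighborFinset v).card)
                ≤ ∑ v ∈ U \ insert z ({n1,n2} : Finset V),
                    (({n1,n2} : Finset V) ∩ Ghat.neighborFinset v).card := by
                  refine Finset.sum_le_sum (fun v hv => ?_)
                  obtain ⟨hvU, hvT⟩ := Finset.mem_sdiff.1 hv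
                  refine Finset.card_le_card (fun w hw => ?_)
                  exact Finset.mem_inter.2 ⟨hsub v hvU hvT hw, (Finset.mem_inter.1 hw).2⟩
              _ = ∑ w ∈ ({n1,n2} : Finset V),
                    ((U \ insert z ({n1,n2} : Finset V)) ∩ Ghat.neighborFinset w).card :=
                  swapCard Ghat _ _
              _ ≤ ∑ w ∈ ({n1,n2} : Finset V), (U ∩ Ghat.neighborFinset w).card := by
                  refine Finset.sum_le_sum (fun w _ => ?_)
                  refine Finset.card_le_card (fun v hv => ?_)
                  obtain ⟨hv1, hv2⟩ := Finset.mem_inter.1 hv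
                  exact Finset.mem_inter.2 ⟨(Finset.mem_sdiff.1 hv1).1, hv2⟩
              _ = (U ∩ Ghat.neighborFinset n1).card + (U ∩ Ghat.neighborFinset n2).card := by
                  rw [Finset.sum_pair hn12]
              _ ≤ 4 := by
                  have := hD2 n1 hn1U
                  have := hD2 n2 hn2U
                  omega
          omega
        omega
end

section
/- Let G be a connected graph with m edges and Perron vector x, let u* be a vertex with maximum entry x_{u*}, U = N(u*), W = V(G)∖(U∪{u*}), U_0 = {u∈U : d_U(u)=0}, U_+ = U∖U_0. If λ(G) > (1 + √(4m−7))/2, then e(W) < e(U_+) − |U_+| + 2. -/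
open Finset

section AuxStmt11
open Finset
variable {V : Type*} [Fintype V] [DecidableEq V] (G : SimpleGraph V) [DecidableRel G.Adj]

private lemma sym2_forall_mem_iff (s : Finset V) (a b : V) :
    (∀ v ∈ s(a, b), v ∈ s) ↔ a ∈ s ∧ b ∈ s := by
  constructor
  · intro h
    exact ⟨h a (by simp), h b (by simp)⟩
  · rintro ⟨h1, h2⟩ v hv
    rcases Sym2.mem_iff.mp hv with rfl | rfl <;> assumption

private lemma pairCount_eq_sum (s t : Finset V) :
    ((Finset.univ : Finset (V × V)).filter
        (fun q => G.Adj q.1 q.2 ∧ q.1 ∈ s ∧ q.2 ∈ t)).card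
      = ∑ u ∈ s, (t.filter (G.Adj u)).card := by
  have h1 : (Finset.univ : Finset (V × V)).filter
        (fun q => G.Adj q.1 q.2 ∧ q.1 ∈ s ∧ q.2 ∈ t)
      = (s ×ˢ t).filter (fun q => G.Adj q.1 q.2) := by
    ext q
    simp only [Finset.mem_filter, Finset.mem_univ, true_and, Finset.mem_product]
    tauto
  rw [h1, Finset.card_filter, Finset.sum_product]
  exact Finset.sum_congr rfl fun u _ => (Finset.card_filter _ _).symm

private lemma two_mul_filter_edge (p : Sym2 V → Prop) [DecidablePred p] :
    ((Finset.univ : Finset (V × V)).filter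
        (fun q => G.Adj q.1 q.2 ∧ p s(q.1, q.2))).card
      = 2 * (G.edgeFinset.filter p).card := by
  classical
  have hmem : ∀ q ∈ (Finset.univ : Finset (V × V)).filter
      (fun q => G.Adj q.1 q.2 ∧ p s(q.1, q.2)),
      s(q.1, q.2) ∈ G.edgeFinset.filter p := by
    intro q hq
    simp only [Finset.mem_filter, Finset.mem_univ, true_and] at hq ⊢
    exact ⟨SimpleGraph.mem_edgeFinset.mpr ((G.mem_edgeSet).mpr hq.1), hq.2⟩
  rw [Finset.card_eq_sum_card_fiberwise hmem]
  have hfib : ∀ e ∈ G.edgeFinset.filter p,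
      (((Finset.univ : Finset (V × V)).filter
        (fun q => G.Adj q.1 q.2 ∧ p s(q.1, q.2))).filter
          (fun q => s(q.1, q.2) = e)).card = 2 := by
    have key : ∀ a b : V, s(a, b) ∈ G.edgeFinset.filter p →
        (((Finset.univ : Finset (V × V)).filter
          (fun q => G.Adj q.1 q.2 ∧ p s(q.1, q.2))).filter
            (fun q => s(q.1, q.2) = s(a, b))).card = 2 := by
      intro a b hab
      simp only [Finset.mem_filter, SimpleGraph.mem_edgeFinset,
        SimpleGraph.mem_edgeSet] at hab
      obtain ⟨hadj, hp⟩ := hab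
      have hset : (((Finset.univ : Finset (V × V)).filter
          (fun q => G.Adj q.1 q.2 ∧ p s(q.1, q.2))).filter
            (fun q => s(q.1, q.2) = s(a, b))) = {(a, b), (b, a)} := by
        ext ⟨u, v⟩
        simp only [Finset.mem_filter, Finset.mem_univ, true_and, Finset.mem_insert,
          Finset.mem_singleton, Prod.mk.injEq, Sym2.eq_iff]
        constructor
        · rintro ⟨-, h⟩; tauto
        · rintro (⟨rfl, rfl⟩ | ⟨rfl, rfl⟩)
          · exact ⟨⟨hadj, hp⟩, Or.inl ⟨rfl, rfl⟩⟩
          · exact ⟨⟨hadj.symm, by rw [Sym2.eq_swap]; exact hp⟩, Or.inr ⟨rfl, rfl⟩⟩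
      rw [hset]
      rw [Finset.card_insert_of_notMem, Finset.card_singleton]
      simp only [Finset.mem_singleton, Prod.mk.injEq, not_and]
      intro h
      exact absurd h hadj.ne
    intro e
    induction e using Sym2.ind with
    | _ a b => exact key a b
  rw [Finset.sum_congr rfl hfib, Finset.sum_const, smul_eq_mul, mul_comm]

private lemma eIn_coe (s : Finset V) :
    eIn G ↑s = (G.edgeFinset.filter (fun e => ∀ v ∈ e, v ∈ s)).card := by
  have h : {e ∈ G.edgeSet | ∀ v ∈ e, v ∈ (↑s : Set V)}
      = ↑(G.edgeFinset.filter (fun e => ∀ v ∈ e, v ∈ s)) := by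
    ext e
    simp [SimpleGraph.mem_edgeFinset]
  rw [eIn, h, Set.ncard_coe_finset]

end AuxStmt11

set_option maxHeartbeats 2000000 in
/-- If `G` is connected with `m` edges and `λ(G) > (1 + √(4m-7))/2`, then
`e(W) < e(U₊) - |U₊| + 2`. -/
theorem stmt_11 {V : Type*} [Fintype V] [DecidableEq V] (G : SimpleGraph V)
    [DecidableRel G.Adj] (hconn : G.Connected)
    (m : ℕ) (hm : G.edgeSet.ncard = m)
    (x : V → ℝ) (hpos : ∀ v, 0 < x v) (hunit : ∑ v : V, x v ^ 2 = 1)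
    (heig : (SimpleGraph.adjMatrix ℝ G).mulVec x = specRad G • x)
    (ustar : V) (hmaxx : ∀ v, x v ≤ x ustar)
    (hlam : (1 + Real.sqrt (4 * (m : ℝ) - 7)) / 2 < specRad G) :
    (eIn G (Wset G ustar) : ℝ) <
      (eIn G (Uplusset G ustar) : ℝ) - ((Uplusset G ustar).ncard : ℝ) + 2 := by
  classical
  set lam := specRad G with hlamdef
  have hX : 0 < x ustar := hpos ustar
  set U : Finset V := G.neighborFinset ustar with hUdef
  set WFn : Finset V := Finset.univ \ (U ∪ {ustar}) with hWdef
  set UpF : Finset V := U.filter (fun v => (U ∩ G.neighborFinset v).Nonempty) with hUpdef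
  have hmemU : ∀ v, v ∈ U ↔ G.Adj ustar v := fun v => SimpleGraph.mem_neighborFinset G ustar v
  have hustarU : ustar ∉ U := by simp [hmemU]
  have hmemW : ∀ v, v ∈ WFn ↔ (v ≠ ustar ∧ v ∉ U) := by
    intro v
    rw [hWdef]
    simp only [Finset.mem_sdiff, Finset.mem_univ, true_and, Finset.mem_union,
      Finset.mem_singleton]
    tauto
  have hUW : ∀ v, v ∈ U → v ∉ WFn := fun v hv hw => ((hmemW v).mp hw).2 hv
  have hWU : ∀ v, v ∈ WFn → v ∉ U := fun v hv => ((hmemW v).mp hv).2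
  have hustarW : ustar ∉ WFn := fun h => ((hmemW ustar).mp h).1 rfl
  have hUpsub : UpF ⊆ U := by rw [hUpdef]; exact Finset.filter_subset _ _
  have hmemUp : ∀ v, v ∈ UpF ↔ v ∈ U ∧ (U ∩ G.neighborFinset v).Nonempty := by
    intro v; rw [hUpdef]; exact Finset.mem_filter
  have hUne : ∀ v ∈ U, ustar ≠ v := fun v hv h => hustarU (h ▸ hv)
  have hWne : ∀ v ∈ WFn, ustar ≠ v := fun v hv h => hustarW (h ▸ hv)
  -- the eigenvalue equation
  have eigen : ∀ v, ∑ w ∈ G.neighborFinset v, x w = lam * x v := by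
    intro v
    have h := congrFun heig v
    rw [SimpleGraph.adjMatrix_mulVec_apply] at h
    simpa using h
  -- partition of the vertex set
  have huniv : ∀ f : V → ℝ, ∑ w : V, f w = f ustar + (∑ w ∈ U, f w + ∑ w ∈ WFn, f w) := by
    intro f
    have hdisj : Disjoint U WFn := Finset.disjoint_left.mpr hUW
    have hnot : ustar ∉ U ∪ WFn := by simp [hustarU, hustarW]
    have hins : insert ustar (U ∪ WFn) = (Finset.univ : Finset V) := by
      ext v
      simp only [Finset.mem_insert, Finset.mem_union, Finset.mem_univ, iff_true]
      by_cases h1 : v = ustar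
      · exact Or.inl h1
      · by_cases h2 : v ∈ U
        · exact Or.inr (Or.inl h2)
        · exact Or.inr (Or.inr ((hmemW v).mpr ⟨h1, h2⟩))
    rw [← hins, Finset.sum_insert hnot, Finset.sum_union hdisj]
  -- splitting a neighbourhood sum
  have hnbr : ∀ u ∈ U, ∑ w ∈ G.neighborFinset u, x w
      = x ustar + (∑ w ∈ U.filter (G.Adj u), x w + ∑ w ∈ WFn.filter (G.Adj u), x w) := by
    intro u hu
    have hadj : G.Adj u ustar := ((hmemU u).mp hu).symm
    rw [SimpleGraph.neighborFinset_eq_filter, Finset.sum_filter, huniv, if_pos hadj,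
      ← Finset.sum_filter, ← Finset.sum_filter]
  set S1 := ∑ u ∈ U, ∑ w ∈ U.filter (G.Adj u), x w with hS1
  set S2 := ∑ u ∈ U, ∑ w ∈ WFn.filter (G.Adj u), x w with hS2
  have hUX : ∑ u ∈ U, x u = lam * x ustar := eigen ustar
  have hF1 : lam * (lam * x ustar) = U.card * x ustar + (S1 + S2) := by
    calc lam * (lam * x ustar) = lam * ∑ u ∈ U, x u := by rw [hUX]
      _ = ∑ u ∈ U, lam * x u := by rw [Finset.mul_sum]
      _ = ∑ u ∈ U, ∑ w ∈ G.neighborFinset u, x w :=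
          Finset.sum_congr rfl fun u _ => (eigen u).symm
      _ = ∑ u ∈ U, (x ustar + (∑ w ∈ U.filter (G.Adj u), x w
            + ∑ w ∈ WFn.filter (G.Adj u), x w)) := Finset.sum_congr rfl hnbr
      _ = U.card * x ustar + (S1 + S2) := by
          rw [Finset.sum_add_distrib, Finset.sum_add_distrib, Finset.sum_const, nsmul_eq_mul]
  have hfiltU : ∀ (s : Finset V) (w : V), s.filter (G.Adj w) = s ∩ G.neighborFinset w := by
    intro s w
    ext u
    rw [Finset.mem_filter, Finset.mem_inter, SimpleGraph.mem_neighborFinset]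
  have hS1' : S1 = ∑ w ∈ U, ((U ∩ G.neighborFinset w).card : ℝ) * x w := by
    rw [hS1]
    calc ∑ u ∈ U, ∑ w ∈ U.filter (G.Adj u), x w
        = ∑ u ∈ U, ∑ w ∈ U, if G.Adj u w then x w else 0 :=
          Finset.sum_congr rfl fun u _ => Finset.sum_filter _ _
      _ = ∑ w ∈ U, ∑ u ∈ U, if G.Adj u w then x w else 0 := Finset.sum_comm
      _ = ∑ w ∈ U, ((U ∩ G.neighborFinset w).card : ℝ) * x w := by
          refine Finset.sum_congr rfl fun w _ => ?_
          have hft : U.filter (fun u => G.Adj u w) = U ∩ G.neighborFinset w := by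
            ext u
            simp only [Finset.mem_filter, Finset.mem_inter, SimpleGraph.mem_neighborFinset]
            rw [G.adj_comm u w]
          rw [← Finset.sum_filter, hft, Finset.sum_const, nsmul_eq_mul]
  have hUp1 : ∀ w ∈ UpF, 0 < (U ∩ G.neighborFinset w).card :=
    fun w hw => Finset.card_pos.mpr ((hmemUp w).mp hw).2
  -- within U₊, U-neighbours are U₊-neighbours
  have hDD : ∑ w ∈ UpF, (U ∩ G.neighborFinset w).card
      = ∑ w ∈ UpF, (UpF ∩ G.neighborFinset w).card := by
    refine Finset.sum_congr rfl fun w hw => ?_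
    congr 1
    ext u
    simp only [Finset.mem_inter, SimpleGraph.mem_neighborFinset]
    constructor
    · rintro ⟨hu, ha⟩
      refine ⟨(hmemUp u).mpr ⟨hu, ⟨w, Finset.mem_inter.mpr ⟨hUpsub hw, ?_⟩⟩⟩, ha⟩
      rw [SimpleGraph.mem_neighborFinset]
      exact ha.symm
    · rintro ⟨hu, ha⟩
      exact ⟨hUpsub hu, ha⟩
  set ep := (G.edgeFinset.filter (fun e => ∀ v ∈ e, v ∈ UpF)).card with hepdef
  set eW := (G.edgeFinset.filter (fun e => ∀ v ∈ e, v ∈ WFn)).card with heWdef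
  set c1 := ∑ u ∈ U, (WFn.filter (G.Adj u)).card with hc1def
  -- handshake within U₊
  have h2ep : 2 * ep = ∑ w ∈ UpF, (UpF ∩ G.neighborFinset w).card := by
    have hpairiff : ((Finset.univ : Finset (V × V)).filter
          (fun q => G.Adj q.1 q.2 ∧ (∀ v ∈ s(q.1, q.2), v ∈ UpF)))
        = ((Finset.univ : Finset (V × V)).filter
          (fun q => G.Adj q.1 q.2 ∧ q.1 ∈ UpF ∧ q.2 ∈ UpF)) := by
      apply Finset.filter_congr
      intro q _
      exact and_congr_right fun _ => sym2_forall_mem_iff UpF q.1 q.2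
    rw [hepdef, ← two_mul_filter_edge G (fun e => ∀ v ∈ e, v ∈ UpF), hpairiff,
      pairCount_eq_sum]
    exact Finset.sum_congr rfl fun w _ => by rw [hfiltU]
  -- bound on S1
  have hFS1 : S1 ≤ lam * x ustar + (2 * (ep : ℝ) - UpF.card) * x ustar := by
    have e1 : S1 - lam * x ustar
        = ∑ w ∈ U, (((U ∩ G.neighborFinset w).card : ℝ) - 1) * x w := by
      rw [hS1', ← hUX, ← Finset.sum_sub_distrib]
      exact Finset.sum_congr rfl fun w _ => by ring
    have e2 : ∑ w ∈ U, (((U ∩ G.neighborFinset w).card : ℝ) - 1) * x w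
        ≤ ∑ w ∈ UpF, (((U ∩ G.neighborFinset w).card : ℝ) - 1) * x ustar := by
      rw [← Finset.sum_filter_add_sum_filter_not U
        (fun v => (U ∩ G.neighborFinset v).Nonempty)
        (fun w => (((U ∩ G.neighborFinset w).card : ℝ) - 1) * x w), ← hUpdef]
      have hA : ∑ w ∈ UpF, (((U ∩ G.neighborFinset w).card : ℝ) - 1) * x w
          ≤ ∑ w ∈ UpF, (((U ∩ G.neighborFinset w).card : ℝ) - 1) * x ustar := by
        apply Finset.sum_le_sum
        intro w hw
        have h1 : (1 : ℝ) ≤ ((U ∩ G.neighborFinset w).card : ℝ) := by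
          exact_mod_cast hUp1 w hw
        exact mul_le_mul_of_nonneg_left (hmaxx w) (by linarith)
      have hB : ∑ w ∈ U.filter (fun v => ¬(U ∩ G.neighborFinset v).Nonempty),
          (((U ∩ G.neighborFinset w).card : ℝ) - 1) * x w ≤ 0 := by
        apply Finset.sum_nonpos
        intro w hw
        have h0 : U ∩ G.neighborFinset w = ∅ :=
          Finset.not_nonempty_iff_eq_empty.mp (Finset.mem_filter.mp hw).2
        rw [h0]
        simp only [Finset.card_empty, Nat.cast_zero, zero_sub]
        have := (hpos w).le
        nlinarith
      linarith
    have e3 : ∑ w ∈ UpF, (((U ∩ G.neighborFinset w).card : ℝ) - 1) * x ustar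
        = (2 * (ep : ℝ) - UpF.card) * x ustar := by
      rw [← Finset.sum_mul]
      congr 1
      rw [Finset.sum_sub_distrib, Finset.sum_const]
      have hcast : ∑ w ∈ UpF, ((U ∩ G.neighborFinset w).card : ℝ) = 2 * (ep : ℝ) := by
        exact_mod_cast congrArg (Nat.cast : ℕ → ℝ) (hDD.trans h2ep.symm)
      rw [hcast]
      simp
    linarith [e1, e2, e3.le, e3.ge]
  -- bound on S2
  have hFS2 : S2 ≤ (c1 : ℝ) * x ustar := by
    rw [hS2, hc1def]
    push_cast
    rw [Finset.sum_mul]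
    apply Finset.sum_le_sum
    intro u _
    have h := Finset.sum_le_card_nsmul (WFn.filter (G.Adj u)) x (x ustar)
      (fun w _ => hmaxx w)
    rwa [nsmul_eq_mul] at h
  -- the cross count
  have hp3iff : ∀ a b : V,
      (∃ a' ∈ U, ∃ b' ∈ WFn, s(a, b) = s(a', b'))
        ↔ ((a ∈ U ∧ b ∈ WFn) ∨ (b ∈ U ∧ a ∈ WFn)) := by
    intro a b
    constructor
    · rintro ⟨a', ha', b', hb', heq⟩
      rcases Sym2.eq_iff.mp heq with ⟨rfl, rfl⟩ | ⟨rfl, rfl⟩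
      · exact Or.inl ⟨ha', hb'⟩
      · exact Or.inr ⟨ha', hb'⟩
    · rintro (⟨h1, h2⟩ | ⟨h1, h2⟩)
      · exact ⟨a, h1, b, h2, rfl⟩
      · exact ⟨b, h1, a, h2, Sym2.eq_swap⟩
  set c3 := (G.edgeFinset.filter (fun e => ∃ a ∈ U, ∃ b ∈ WFn, e = s(a, b))).card with hc3def
  have hc3 : c3 = c1 := by
    have hsplit : ∀ q : V × V,
        (if G.Adj q.1 q.2 ∧ (∃ a ∈ U, ∃ b ∈ WFn, s(q.1, q.2) = s(a, b)) then (1:ℕ) else 0)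
          = (if G.Adj q.1 q.2 ∧ (q.1 ∈ U ∧ q.2 ∈ WFn) then 1 else 0)
            + (if G.Adj q.1 q.2 ∧ (q.2 ∈ U ∧ q.1 ∈ WFn) then 1 else 0) := by
      intro q
      rw [if_congr (and_congr_right fun _ => hp3iff q.1 q.2) rfl rfl]
      by_cases h5 : G.Adj q.1 q.2
      · by_cases hA : q.1 ∈ U ∧ q.2 ∈ WFn <;> by_cases hB : q.2 ∈ U ∧ q.1 ∈ WFn
        · exact (hUW q.1 hA.1 hB.2).elim
        · simp [h5, hA, hB]
        · simp [h5, hA, hB]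
        · simp [h5, hA, hB]
      · simp [h5]
    have h2c3 : 2 * c3
        = ((Finset.univ : Finset (V × V)).filter
            (fun q => G.Adj q.1 q.2 ∧ (q.1 ∈ U ∧ q.2 ∈ WFn))).card
          + ((Finset.univ : Finset (V × V)).filter
            (fun q => G.Adj q.1 q.2 ∧ (q.2 ∈ U ∧ q.1 ∈ WFn))).card := by
      rw [hc3def, ← two_mul_filter_edge G (fun e => ∃ a ∈ U, ∃ b ∈ WFn, e = s(a, b)),
        Finset.card_filter, Finset.card_filter, Finset.card_filter,
        ← Finset.sum_add_distrib]
      exact Finset.sum_congr rfl fun q _ => hsplit q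
    have hcA : ((Finset.univ : Finset (V × V)).filter
        (fun q => G.Adj q.1 q.2 ∧ (q.1 ∈ U ∧ q.2 ∈ WFn))).card = c1 := by
      rw [hc1def, ← pairCount_eq_sum]
    have hcB : ((Finset.univ : Finset (V × V)).filter
        (fun q => G.Adj q.1 q.2 ∧ (q.2 ∈ U ∧ q.1 ∈ WFn))).card = c1 := by
      have hcg : ((Finset.univ : Finset (V × V)).filter
          (fun q => G.Adj q.1 q.2 ∧ (q.2 ∈ U ∧ q.1 ∈ WFn)))
          = ((Finset.univ : Finset (V × V)).filter
          (fun q => G.Adj q.1 q.2 ∧ (q.1 ∈ WFn ∧ q.2 ∈ U))) := by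
        apply Finset.filter_congr
        intro q _
        exact and_congr_right fun _ => and_comm
      rw [hcg, pairCount_eq_sum, hc1def]
      have l : ∀ (s t : Finset V),
          ∑ u ∈ s, (t.filter (G.Adj u)).card
            = ∑ u ∈ s, ∑ w ∈ t, if G.Adj u w then 1 else 0 :=
        fun s t => Finset.sum_congr rfl fun u _ => Finset.card_filter _ _
      rw [l, l, Finset.sum_comm]
      exact Finset.sum_congr rfl fun u _ => Finset.sum_congr rfl fun w _ =>
        if_congr (G.adj_comm w u) rfl rfl
    omega
  -- classification of the edges
  have tri : ∀ v : V, v = ustar ∨ v ∈ U ∨ v ∈ WFn := by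
    intro v
    by_cases h1 : v = ustar
    · exact Or.inl h1
    · by_cases h2 : v ∈ U
      · exact Or.inr (Or.inl h2)
      · exact Or.inr (Or.inr ((hmemW v).mpr ⟨h1, h2⟩))
  have hclass : ∀ e ∈ G.edgeFinset,
      (1 : ℕ) = (if ustar ∈ e then 1 else 0) + (if ∀ v ∈ e, v ∈ U then 1 else 0)
        + (if ∃ a ∈ U, ∃ b ∈ WFn, e = s(a, b) then 1 else 0)
        + (if ∀ v ∈ e, v ∈ WFn then 1 else 0) := by
    have key : ∀ a b : V, G.Adj a b →
        (1 : ℕ) = (if ustar ∈ s(a, b) then 1 else 0)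
          + (if ∀ v ∈ s(a, b), v ∈ U then 1 else 0)
          + (if ∃ a' ∈ U, ∃ b' ∈ WFn, s(a, b) = s(a', b') then 1 else 0)
          + (if ∀ v ∈ s(a, b), v ∈ WFn then 1 else 0) := by
      intro a b hab
      rw [if_congr (Sym2.mem_iff) rfl rfl,
        if_congr (sym2_forall_mem_iff U a b) rfl rfl,
        if_congr (hp3iff a b) rfl rfl,
        if_congr (sym2_forall_mem_iff WFn a b) rfl rfl]
      rcases tri a with ha | ha | ha <;> rcases tri b with hb | hb | hb
      · exact absurd (ha.trans hb.symm) hab.ne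
      · subst ha
        simp [hustarU, hustarW, hUW b hb]
      · subst ha
        exact ((hUW b ((hmemU b).mpr hab)) hb).elim
      · subst hb
        simp [hustarU, hustarW, hUW a ha]
      · simp [ha, hb, hUne a ha, hUne b hb, hUW a ha, hUW b hb]
      · simp [ha, hb, hUne a ha, hWne b hb, hUW a ha, hWU b hb]
      · subst hb
        exact ((hUW a ((hmemU a).mpr hab.symm)) ha).elim
      · simp [ha, hb, hWne a ha, hUne b hb, hWU a ha, hUW b hb]
      · simp [ha, hb, hWne a ha, hWne b hb, hWU a ha, hWU b hb]
    intro e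
    induction e using Sym2.ind with
    | _ a b =>
      intro he
      exact key a b (G.mem_edgeSet.mp (SimpleGraph.mem_edgeFinset.mp he))
  -- e(U) = e(U₊)
  have he2ep : (G.edgeFinset.filter (fun e => ∀ v ∈ e, v ∈ U)).card = ep := by
    rw [hepdef]
    congr 1
    apply Finset.filter_congr
    intro e
    induction e using Sym2.ind with
    | _ a b =>
      intro he
      have hab : G.Adj a b := G.mem_edgeSet.mp (SimpleGraph.mem_edgeFinset.mp he)
      rw [sym2_forall_mem_iff, sym2_forall_mem_iff]
      constructor
      · rintro ⟨h1, h2⟩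
        constructor
        · exact (hmemUp a).mpr ⟨h1, ⟨b, Finset.mem_inter.mpr ⟨h2,
            (SimpleGraph.mem_neighborFinset G a b).mpr hab⟩⟩⟩
        · exact (hmemUp b).mpr ⟨h2, ⟨a, Finset.mem_inter.mpr ⟨h1,
            (SimpleGraph.mem_neighborFinset G b a).mpr hab.symm⟩⟩⟩
      · rintro ⟨h1, h2⟩
        exact ⟨hUpsub h1, hUpsub h2⟩
  -- the edge partition
  have hm4 : m = U.card + ((G.edgeFinset.filter (fun e => ∀ v ∈ e, v ∈ U)).card + (c3 + eW)) := by
    have hmcard : m = G.edgeFinset.card := by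
      rw [← hm, ← SimpleGraph.coe_edgeFinset, Set.ncard_coe_finset]
    have h1 : (G.edgeFinset.filter (fun e => ustar ∈ e)).card = U.card := by
      rw [← SimpleGraph.incidenceFinset_eq_filter, SimpleGraph.card_incidenceFinset_eq_degree]
      exact (SimpleGraph.card_neighborFinset_eq_degree G ustar).symm
    rw [hmcard]
    calc G.edgeFinset.card = ∑ e ∈ G.edgeFinset, (1 : ℕ) := by
          rw [Finset.card_eq_sum_ones]
      _ = ∑ e ∈ G.edgeFinset, ((if ustar ∈ e then 1 else 0)
            + (if ∀ v ∈ e, v ∈ U then 1 else 0)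
            + (if ∃ a ∈ U, ∃ b ∈ WFn, e = s(a, b) then 1 else 0)
            + (if ∀ v ∈ e, v ∈ WFn then 1 else 0)) := Finset.sum_congr rfl hclass
      _ = U.card + ((G.edgeFinset.filter (fun e => ∀ v ∈ e, v ∈ U)).card + (c3 + eW)) := by
          rw [Finset.sum_add_distrib, Finset.sum_add_distrib, Finset.sum_add_distrib,
            ← Finset.card_filter, ← Finset.card_filter, ← Finset.card_filter,
            ← Finset.card_filter, h1, hc3def, heWdef]
          ring
  -- lambda^2 - lambda > m - 2
  have hF5 : (m : ℝ) - 2 < lam * lam - lam := by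
    have hs0 : 0 ≤ Real.sqrt (4 * (m : ℝ) - 7) := Real.sqrt_nonneg _
    have hs1 : Real.sqrt (4 * (m : ℝ) - 7) < 2 * lam - 1 := by linarith [hlam]
    have hs2 : (4 * (m : ℝ) - 7) ≤ (Real.sqrt (4 * (m : ℝ) - 7)) ^ 2 := by
      rcases le_or_gt 0 (4 * (m : ℝ) - 7) with h | h
      · rw [Real.sq_sqrt h]
      · nlinarith [Real.sqrt_nonneg (4 * (m : ℝ) - 7)]
    nlinarith [hs0, hs1, hs2, mul_pos (by linarith : (0:ℝ) < 2 * lam - 1 - Real.sqrt (4 * (m : ℝ) - 7)) (by linarith : (0:ℝ) < 2 * lam - 1 + Real.sqrt (4 * (m : ℝ) - 7))]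
  -- combining
  have hle : lam * lam - lam ≤ (U.card : ℝ) + 2 * ep - UpF.card + c1 := by
    have e0 : (lam * lam - lam) * x ustar = (U.card : ℝ) * x ustar + (S1 + S2) - lam * x ustar := by
      rw [show (lam * lam - lam) * x ustar = lam * (lam * x ustar) - lam * x ustar by ring, hF1]
    have hXle : (lam * lam - lam) * x ustar
        ≤ ((U.card : ℝ) + 2 * ep - UpF.card + c1) * x ustar := by
      rw [e0, show ((U.card : ℝ) + 2 * ep - UpF.card + c1) * x ustar
        = (U.card : ℝ) * x ustar + ((2 * (ep:ℝ) - UpF.card) * x ustar + (c1 : ℝ) * x ustar) by ring]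
      linarith [hFS1, hFS2]
    exact le_of_mul_le_mul_right hXle hX
  -- rewriting the goal
  have hWset : Wset G ustar = ↑WFn := by
    rw [Wset, hWdef, hUdef, Finset.coe_sdiff, Finset.coe_univ, Finset.coe_union,
      Finset.coe_singleton, SimpleGraph.neighborFinset_def, Set.coe_toFinset]
  have hdInEq : ∀ v, dIn G (G.neighborSet ustar) v = (U ∩ G.neighborFinset v).card := by
    intro v
    rw [dIn, show G.neighborSet ustar ∩ G.neighborSet v = ↑(U ∩ G.neighborFinset v) by
      rw [Finset.coe_inter, hUdef, SimpleGraph.neighborFinset_def,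
        SimpleGraph.neighborFinset_def, Set.coe_toFinset, Set.coe_toFinset],
      Set.ncard_coe_finset]
  have hUpset : Uplusset G ustar = ↑UpF := by
    ext v
    rw [Uplusset]
    simp only [Set.mem_setOf_eq, SimpleGraph.mem_neighborSet, Finset.mem_coe, hmemUp v,
      hmemU v, hdInEq v, ← Finset.card_ne_zero]
  have hgoal1 : eIn G (Wset G ustar) = eW := by rw [hWset, eIn_coe, heWdef]
  have hgoal2 : eIn G (Uplusset G ustar) = ep := by rw [hUpset, eIn_coe, hepdef]
  have hgoal3 : (Uplusset G ustar).ncard = UpF.card := by rw [hUpset, Set.ncard_coe_finset]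
  rw [hgoal1, hgoal2, hgoal3]
  have hmR : (m : ℝ) = (U.card : ℝ) + ((ep : ℝ) + ((c1 : ℝ) + (eW : ℝ))) := by
    rw [hm4, he2ep, hc3]
    push_cast
    ring
  linarith [hle, hF5, hmR]
end

section
/- For every integer m ≥ 58 and every real x > (1 + √(4m−7))/2, the polynomial f_4(x) = x⁴ − m·x² − (m−5)·x + 2(m−5) satisfies f_4(x) > 0. In particular, f_4(x) = (x² + x − 1)(x² − x − (m−2)) + 2x + (m−8). -/
open Finset

/-- For every integer `m ≥ 58` and real `x > (1 + √(4m-7))/2`,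
`f₄(x) = x⁴ - m·x² - (m-5)·x + 2(m-5) > 0`; in particular
`f₄(x) = (x² + x - 1)(x² - x - (m-2)) + 2x + (m-8)`. -/
theorem stmt_15 (m : ℕ) (hm : 58 ≤ m) :
    (∀ x : ℝ, (1 + Real.sqrt (4 * (m : ℝ) - 7)) / 2 < x →
      0 < x ^ 4 - (m : ℝ) * x ^ 2 - ((m : ℝ) - 5) * x + 2 * ((m : ℝ) - 5)) ∧
    (∀ x : ℝ, x ^ 4 - (m : ℝ) * x ^ 2 - ((m : ℝ) - 5) * x + 2 * ((m : ℝ) - 5)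
      = (x ^ 2 + x - 1) * (x ^ 2 - x - ((m : ℝ) - 2)) + 2 * x + ((m : ℝ) - 8)) := by
  have hm' : (58 : ℝ) ≤ (m : ℝ) := by exact_mod_cast hm
  constructor
  · intro x hx
    set s := Real.sqrt (4 * (m : ℝ) - 7) with hs
    have hs0 : 0 ≤ s := Real.sqrt_nonneg _
    have hs2 : s ^ 2 = 4 * (m : ℝ) - 7 := by
      rw [hs, Real.sq_sqrt]; linarith
    have hx' : (1 + s) / 2 < x := hx
    have hquad : 0 < x ^ 2 - x - ((m : ℝ) - 2) := by nlinarith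
    have hx15 : 15 ≤ s := by nlinarith
    have hx8 : 8 ≤ x := by linarith
    nlinarith [hquad, sq_nonneg x, sq_nonneg (x - 1)]
  · intro x; ring
end

section
/- Let m, r, s be integers with m ≥ 58 odd, r ≥ 7, 2 ≤ s ≤ r, and m = 2r + s + 1 (equivalently 2(r−s) = m − 3s − 1). Then for every real x > (1 + √(4m−7))/2, the polynomial f(x) = x⁴ − x³ + (1−m)·x² + s·x − 3s² + m·s − s satisfies f(x) > 0. -/
open Finset

/-- For integers `m, r, s` with odd `m ≥ 58`, `r ≥ 7`, `2 ≤ s ≤ r` and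
`m = 2r + s + 1`, the polynomial `f(x) = x⁴ - x³ + (1-m)x² + s·x - 3s² + m·s - s` is
positive for all real `x > (1 + √(4m-7))/2`. -/
theorem stmt_16 (m r sv : ℕ) (hm : 58 ≤ m) (hodd : Odd m) (hr : 7 ≤ r)
    (hs2 : 2 ≤ sv) (hsr : sv ≤ r) (hmrs : m = 2 * r + sv + 1) :
    ∀ x : ℝ, (1 + Real.sqrt (4 * (m : ℝ) - 7)) / 2 < x →
      0 < x ^ 4 - x ^ 3 + (1 - (m : ℝ)) * x ^ 2 + (sv : ℝ) * x
          - 3 * (sv : ℝ) ^ 2 + (m : ℝ) * (sv : ℝ) - (sv : ℝ) := by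
  intro x hx
  have hM58 : (58 : ℝ) ≤ (m : ℝ) := by exact_mod_cast hm
  have hS2 : (2 : ℝ) ≤ (sv : ℝ) := by exact_mod_cast hs2
  have hM3S : 3 * (sv : ℝ) + 1 ≤ (m : ℝ) := by
    have : 3 * sv + 1 ≤ m := by omega
    exact_mod_cast this
  set M : ℝ := (m : ℝ) with hM
  set S : ℝ := (sv : ℝ) with hS
  have hnn : (0 : ℝ) ≤ 4 * M - 7 := by linarith
  have hsq : Real.sqrt (4 * M - 7) ^ 2 = 4 * M - 7 := Real.sq_sqrt hnn
  have h15 : (15 : ℝ) ≤ Real.sqrt (4 * M - 7) := by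
    have : (15 : ℝ) = Real.sqrt 225 := by
      rw [show (225 : ℝ) = 15 ^ 2 by norm_num, Real.sqrt_sq (by norm_num)]
    rw [this]
    exact Real.sqrt_le_sqrt (by linarith)
  have hx8 : (8 : ℝ) < x := by linarith
  have h2x : Real.sqrt (4 * M - 7) < 2 * x - 1 := by linarith
  have hq : 0 < x ^ 2 - x - (M - 2) := by nlinarith [Real.sqrt_nonneg (4 * M - 7)]
  have hx2 : 0 < x ^ 2 - 1 := by nlinarith
  have key : x ^ 4 - x ^ 3 + (1 - M) * x ^ 2 + S * x - 3 * S ^ 2 + M * S - S =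
      (x ^ 2 - x - (M - 2)) * (x ^ 2 - 1) + (S - 1) * x + ((S - 1) * M - 3 * S ^ 2 - S + 2) := by
    ring
  rw [key]
  nlinarith [mul_pos hq hx2, mul_nonneg (by linarith : (0:ℝ) ≤ S - 1) (by linarith : (0:ℝ) ≤ x - 8),
    mul_nonneg (by linarith : (0:ℝ) ≤ S - 1) (by linarith : (0:ℝ) ≤ M - (3 * S + 1))]
end
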